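/- arXiv:2311.01261 — 5 statements merged into one kernel-verified Lean document; each statement's English description precedes it below -/
import Mathlib

section
/- Let $\lambda, \mu > 0$ and let $k$ be a positive integer. Then the five-dimensional integral $\int_{\mathbb{R}_+^5} \mathbf{1}\{z_1 - z_5 > x\}\,\mathbf{1}\{z_3 > x\}\,\mathbf{1}\{z_4 > y\}\,\mathbf{1}\{z_1 + z_2 - z_5 - z_3 > y\}\,\mathbf{1}\{z_5 + z_3 > z_1\}\, \frac{\lambda^k z_5^{k-1}}{\Gamma(k)} e^{-\lambda z_5} \mu^4 e^{-\mu(z_1+z_2+z_3+z_4)}\, dz_1\,dz_2\,dz_3\,dz_4\,dz_5$ equals $\frac{e^{-2\mu(x+y)}}{4}\left(\frac{\lambda}{\lambda+\mu}\right)^k$ for all $x, y \geq 0$. -/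
open MeasureTheory Real

section Helpers
open Set Filter

lemma exp_tendsto_zero {c : ℝ} (hc : 0 < c) :
    Tendsto (fun t : ℝ => Real.exp (-(c*t))) atTop (nhds 0) := by
  have h1 : Tendsto (fun t : ℝ => c * t) atTop atTop := Tendsto.const_mul_atTop hc tendsto_id
  have h2 : Tendsto (fun t : ℝ => -(c * t)) atTop atBot := tendsto_neg_atTop_atBot.comp h1
  have := Real.tendsto_exp_atBot.comp h2
  simpa only [Function.comp_def] using this

lemma int_exp_Ioi {c : ℝ} (hc : 0 < c) (b : ℝ) :
    ∫ t in Set.Ioi b, Real.exp (-(c*t)) = Real.exp (-(c*b)) / c := by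
  have hderiv : ∀ t ∈ Set.Ici b, HasDerivAt (fun t => -Real.exp (-(c*t)) / c)
      (Real.exp (-(c*t))) t := by
    intro t _
    have h1 : HasDerivAt (fun t : ℝ => -(c*t)) (-c) t := by
      simpa [Pi.neg_def] using ((hasDerivAt_id t).const_mul c).neg
    have h2 : HasDerivAt (fun t => -Real.exp (-(c*t)) / c) (-(Real.exp (-(c*t)) * -c) / c) t :=
      (h1.exp).neg.div_const c
    convert h2 using 1
    field_simp
  have hint : IntegrableOn (fun t => Real.exp (-(c*t))) (Set.Ioi b) := by
    simpa [neg_mul] using exp_neg_integrableOn_Ioi b hc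
  have htend : Tendsto (fun t => -Real.exp (-(c*t)) / c) atTop (nhds 0) := by
    have := (exp_tendsto_zero hc).neg.div_const c
    simpa using this
  have := integral_Ioi_of_hasDerivAt_of_tendsto' hderiv hint htend
  rw [this]; ring

lemma int_linexp_Ioi {c : ℝ} (hc : 0 < c) (b : ℝ) :
    ∫ t in Set.Ioi b, (t - b) * Real.exp (-(c*t)) = Real.exp (-(c*b)) / c^2 := by
  have hc' : c ≠ 0 := hc.ne'
  set F : ℝ → ℝ := fun t => -(((t - b) * c + 1) / c^2) * Real.exp (-(c*t)) with hF
  have hderiv : ∀ t ∈ Set.Ici b, HasDerivAt F ((t - b) * Real.exp (-(c*t))) t := by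
    intro t _
    have h1 : HasDerivAt (fun t : ℝ => -(((t - b) * c + 1) / c^2)) (-(c / c^2)) t := by
      simpa [Pi.neg_def] using (((((hasDerivAt_id t).sub_const b).mul_const c).add_const 1).div_const (c^2)).neg
    have h2 : HasDerivAt (fun t : ℝ => Real.exp (-(c*t))) (Real.exp (-(c*t)) * (-c)) t := by
      have : HasDerivAt (fun t : ℝ => -(c*t)) (-c) t := by
        simpa [Pi.neg_def] using ((hasDerivAt_id t).const_mul c).neg
      exact this.exp
    have : HasDerivAt (fun t => -(((t - b) * c + 1) / c^2) * Real.exp (-(c*t)))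
        (-(c / c ^ 2) * rexp (-(c * t)) + -(((t - b) * c + 1) / c ^ 2) * (rexp (-(c * t)) * -c)) t :=
      h1.mul h2
    convert this using 1
    field_simp
    ring
  have htend : Tendsto F atTop (nhds 0) := by
    have ht1 : Tendsto (fun t : ℝ => (c*t) * Real.exp (-(c*t))) atTop (nhds 0) := by
      have h1 : Tendsto (fun t : ℝ => c * t) atTop atTop :=
        Tendsto.const_mul_atTop hc tendsto_id
      have := (Real.tendsto_pow_mul_exp_neg_atTop_nhds_zero 1).comp h1
      simpa only [Function.comp_def, pow_one] using this
    have ht2 := exp_tendsto_zero hc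
    have := (ht1.const_mul (-(1/c^2))).add (ht2.const_mul (((b*c - 1))/c^2))
    have h0 : (-(1/c^2)) * 0 + ((b*c - 1)/c^2) * 0 = 0 := by ring
    rw [h0] at this
    refine this.congr fun t => ?_
    rw [hF]
    field_simp
    ring
  have hint : IntegrableOn (fun t => (t - b) * Real.exp (-(c*t))) (Set.Ioi b) := by
    refine integrableOn_Ioi_deriv_of_nonneg' hderiv (fun t ht => ?_) htend
    have : (0:ℝ) ≤ t - b := by simp at ht; linarith
    positivity
  have := integral_Ioi_of_hasDerivAt_of_tendsto' hderiv hint htend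
  rw [this, hF]
  field_simp
  ring

lemma if_Ioi (g : ℝ → ℝ) {a : ℝ} (ha : 0 ≤ a) :
    ∫ t in Set.Ioi (0:ℝ), (if a < t then g t else 0) = ∫ t in Set.Ioi a, g t := by
  have h : ∀ t, (if a < t then g t else 0) = Set.indicator (Set.Ioi a) g t := fun t => by
    simp [Set.indicator_apply]
  simp_rw [h]
  rw [setIntegral_indicator measurableSet_Ioi,
    Set.inter_eq_self_of_subset_right (Set.Ioi_subset_Ioi ha)]

lemma if_Ioo_const (K a b : ℝ) (ha : 0 ≤ a) (hab : a ≤ b) :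
    ∫ t in Set.Ioi (0:ℝ), (if a < t ∧ t < b then K else 0) = (b - a) * K := by
  have h : ∀ t, (if a < t ∧ t < b then K else 0)
      = Set.indicator (Set.Ioo a b) (fun _ => K) t := fun t => by
    simp [Set.indicator_apply, Set.mem_Ioo]
  simp_rw [h]
  rw [setIntegral_indicator measurableSet_Ioo]
  have hsub : Set.Ioo a b ⊆ Set.Ioi 0 := fun t ht => lt_of_le_of_lt ha ht.1
  rw [Set.inter_eq_self_of_subset_right hsub]
  rw [setIntegral_const, Real.volume_real_Ioo_of_le hab, smul_eq_mul]

lemma int_gamma {r : ℝ} (hr : 0 < r) {k : ℕ} (hk : 1 ≤ k) :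
    ∫ t in Set.Ioi (0:ℝ), t ^ (k-1) * Real.exp (-(r*t)) = Real.Gamma k / r ^ k := by
  have hk0 : (0:ℝ) < (k:ℝ) := by exact_mod_cast hk
  have h := Real.integral_rpow_mul_exp_neg_mul_Ioi hk0 hr
  have h2 : ∀ t ∈ Set.Ioi (0:ℝ), t ^ (k-1) * Real.exp (-(r*t))
      = t ^ ((k:ℝ)-1) * Real.exp (-(r*t)) := by
    intro t ht
    congr 1
    rw [← Real.rpow_natCast t (k-1), Nat.cast_sub hk, Nat.cast_one]
  rw [setIntegral_congr_fun measurableSet_Ioi h2, h, Real.rpow_natCast, div_pow, one_pow]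
  ring

lemma step12 {mu : ℝ} (hmu : 0 < mu) {x y z3 z5 : ℝ} (hx : 0 ≤ x) (hy : 0 ≤ y)
    (hz5 : 0 ≤ z5) (hx3 : x < z3) :
    (∫ z2 in Set.Ioi (0:ℝ), ∫ z1 in Set.Ioi (0:ℝ),
      (if x < z1 - z5 ∧ y < z1 + z2 - z5 - z3 ∧ z1 < z5 + z3
        then Real.exp (-(mu*z1)) * Real.exp (-(mu*z2)) else 0))
    = (z3 - x) * (Real.exp (-(mu*(y+z5+z3))) / mu) := by
  set f : ℝ → ℝ → ℝ := fun z2 z1 =>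
    if x < z1 - z5 ∧ y < z1 + z2 - z5 - z3 ∧ z1 < z5 + z3
      then Real.exp (-(mu*z1)) * Real.exp (-(mu*z2)) else 0 with hf
  have hexp : Integrable (fun t => Real.exp (-(mu*t))) (volume.restrict (Set.Ioi (0:ℝ))) := by
    simpa [neg_mul, IntegrableOn] using exp_neg_integrableOn_Ioi 0 hmu
  have hS : MeasurableSet {p : ℝ × ℝ | x < p.2 - z5 ∧ y < p.2 + p.1 - z5 - z3 ∧ p.2 < z5 + z3} := by
    refine MeasurableSet.inter ?_ (MeasurableSet.inter ?_ ?_)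
    · exact measurableSet_lt measurable_const (measurable_snd.sub measurable_const)
    · exact measurableSet_lt measurable_const
        (((measurable_snd.add measurable_fst).sub measurable_const).sub measurable_const)
    · exact measurableSet_lt measurable_snd measurable_const
  have hmeas : Measurable (Function.uncurry f) := by
    refine Measurable.ite hS ?_ measurable_const
    fun_prop
  have hInt : Integrable (Function.uncurry f)
      ((volume.restrict (Set.Ioi (0:ℝ))).prod (volume.restrict (Set.Ioi (0:ℝ)))) := by
    refine Integrable.mono' (g := fun p : ℝ × ℝ => Real.exp (-(mu*p.1)) * Real.exp (-(mu*p.2)))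
      (Integrable.mul_prod hexp hexp) hmeas.aestronglyMeasurable ?_
    refine Filter.Eventually.of_forall fun p => ?_
    simp only [Function.uncurry, hf]
    split_ifs with h
    · rw [Real.norm_eq_abs, abs_of_nonneg (by positivity)]
      exact le_of_eq (mul_comm _ _)
    · simp [Real.norm_eq_abs]
      positivity
  rw [integral_integral_swap hInt]
  have inner : ∀ z1 ∈ Set.Ioi (0:ℝ), (∫ z2 in Set.Ioi (0:ℝ), f z2 z1)
      = (if x + z5 < z1 ∧ z1 < z5 + z3 then Real.exp (-(mu*(y+z5+z3))) / mu else 0) := by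
    intro z1 _
    by_cases h1 : x + z5 < z1 ∧ z1 < z5 + z3
    · rw [if_pos h1]
      have hcong : ∀ z2, f z2 z1 = Real.exp (-(mu*z1)) *
          (if (y + z5 + z3 - z1) < z2 then Real.exp (-(mu*z2)) else 0) := by
        intro z2
        simp only [hf]
        split_ifs with h h2 h2
        · ring
        · exact absurd (by linarith [h.2.1]) h2
        · exact absurd ⟨by linarith [h1.1], by linarith, h1.2⟩ h
        · rw [mul_zero]
      simp_rw [hcong]
      rw [MeasureTheory.integral_const_mul, if_Ioi (fun z2 => Real.exp (-(mu*z2))) (by linarith [h1.2]),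
        int_exp_Ioi hmu]
      rw [mul_div_assoc', ← Real.exp_add]
      congr 2
      ring
    · rw [if_neg h1]
      have hz : ∀ z2 ∈ Set.Ioi (0:ℝ), f z2 z1 = (0:ℝ) := by
        intro z2 _
        simp only [hf]
        rw [if_neg]
        intro h
        exact h1 ⟨by linarith [h.1], h.2.2⟩
      rw [setIntegral_congr_fun measurableSet_Ioi hz, integral_zero]
  rw [setIntegral_congr_fun measurableSet_Ioi inner,
    if_Ioo_const _ _ _ (by linarith) (by linarith)]
  ring

end Helpers

theorem tandem_joint_first_term (lam mu : ℝ) (hlam : 0 < lam) (hmu : 0 < mu)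
    (k : ℕ) (hk : 1 ≤ k) (x y : ℝ) (hx : 0 ≤ x) (hy : 0 ≤ y) :
    (∫ z5 in Set.Ioi (0:ℝ), ∫ z4 in Set.Ioi (0:ℝ), ∫ z3 in Set.Ioi (0:ℝ),
      ∫ z2 in Set.Ioi (0:ℝ), ∫ z1 in Set.Ioi (0:ℝ),
        (if z1 - z5 > x ∧ z3 > x ∧ z4 > y ∧ z1 + z2 - z5 - z3 > y ∧ z5 + z3 > z1 then
          lam ^ k * z5 ^ (k - 1) / Real.Gamma k * Real.exp (-(lam * z5)) *
            mu ^ 4 * Real.exp (-(mu * (z1 + z2 + z3 + z4)))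
        else 0)) =
      Real.exp (-(2 * mu * (x + y))) / 4 * (lam / (lam + mu)) ^ k := by
  have hk0 : (0:ℝ) < (k:ℝ) := by exact_mod_cast hk
  have hΓ : 0 < Real.Gamma k := Real.Gamma_pos_of_pos hk0
  set A : ℝ → ℝ := fun z5 =>
    lam ^ k * z5 ^ (k - 1) / Real.Gamma k * Real.exp (-(lam * z5)) * mu ^ 4 with hA
  set C : ℝ := lam ^ k / Real.Gamma k * (Real.exp (-(2 * mu * (x + y))) / 4) with hC
  have key5 : ∀ z5 ∈ Set.Ioi (0:ℝ),
      (∫ z4 in Set.Ioi (0:ℝ), ∫ z3 in Set.Ioi (0:ℝ),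
        ∫ z2 in Set.Ioi (0:ℝ), ∫ z1 in Set.Ioi (0:ℝ),
        (if z1 - z5 > x ∧ z3 > x ∧ z4 > y ∧ z1 + z2 - z5 - z3 > y ∧ z5 + z3 > z1 then
          A z5 * Real.exp (-(mu * (z1 + z2 + z3 + z4)))
        else 0))
      = C * (z5 ^ (k-1) * Real.exp (-((lam+mu) * z5))) := by
    intro z5 hz5
    rw [Set.mem_Ioi] at hz5
    have key12 : ∀ z4 z3 : ℝ,
        (∫ z2 in Set.Ioi (0:ℝ), ∫ z1 in Set.Ioi (0:ℝ),
          (if z1 - z5 > x ∧ z3 > x ∧ z4 > y ∧ z1 + z2 - z5 - z3 > y ∧ z5 + z3 > z1 then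
            A z5 * Real.exp (-(mu * (z1 + z2 + z3 + z4))) else 0))
        = (if x < z3 ∧ y < z4 then
            A z5 * Real.exp (-(mu*(z3+z4))) *
              ((z3 - x) * (Real.exp (-(mu*(y+z5+z3))) / mu)) else 0) := by
      intro z4 z3
      by_cases h34 : x < z3 ∧ y < z4
      · rw [if_pos h34]
        have hcong : ∀ z2 z1 : ℝ,
            (if z1 - z5 > x ∧ z3 > x ∧ z4 > y ∧ z1 + z2 - z5 - z3 > y ∧ z5 + z3 > z1 then
              A z5 * Real.exp (-(mu * (z1 + z2 + z3 + z4))) else 0)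
            = (A z5 * Real.exp (-(mu*(z3+z4)))) *
              (if x < z1 - z5 ∧ y < z1 + z2 - z5 - z3 ∧ z1 < z5 + z3
                then Real.exp (-(mu*z1)) * Real.exp (-(mu*z2)) else 0) := by
          intro z2 z1
          split_ifs with h h2 h2
          · have e1 : Real.exp (-(mu * (z1 + z2 + z3 + z4)))
                = Real.exp (-(mu*(z3+z4))) * (Real.exp (-(mu*z1)) * Real.exp (-(mu*z2))) := by
              rw [← Real.exp_add, ← Real.exp_add]
              congr 1
              ring
            rw [e1]
            ring
          · exact absurd ⟨h.1, h.2.2.2.1, h.2.2.2.2⟩ h2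
          · exact absurd ⟨h2.1, h34.1, h34.2, h2.2.1, h2.2.2⟩ h
          · rw [mul_zero]
        simp_rw [hcong, MeasureTheory.integral_const_mul]
        rw [step12 hmu hx hy (le_of_lt hz5) h34.1]
      · rw [if_neg h34]
        have hcong : ∀ z2 z1 : ℝ,
            (if z1 - z5 > x ∧ z3 > x ∧ z4 > y ∧ z1 + z2 - z5 - z3 > y ∧ z5 + z3 > z1 then
              A z5 * Real.exp (-(mu * (z1 + z2 + z3 + z4))) else 0) = (0:ℝ) := by
          intro z2 z1
          rw [if_neg]
          intro h
          exact h34 ⟨h.2.1, h.2.2.1⟩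
        simp_rw [hcong, integral_zero]
    have step3 : ∀ z4 : ℝ,
        (∫ z3 in Set.Ioi (0:ℝ), (if x < z3 ∧ y < z4 then
            A z5 * Real.exp (-(mu*(z3+z4))) *
              ((z3 - x) * (Real.exp (-(mu*(y+z5+z3))) / mu)) else 0))
        = (if y < z4 then
            A z5 * Real.exp (-(mu*z4)) * Real.exp (-(mu*(y+z5))) / mu *
              (Real.exp (-(2*mu*x)) / (2*mu)^2) else 0) := by
      intro z4
      by_cases h4 : y < z4
      · rw [if_pos h4]
        have hcong : ∀ z3 : ℝ, (if x < z3 ∧ y < z4 then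
              A z5 * Real.exp (-(mu*(z3+z4))) *
                ((z3 - x) * (Real.exp (-(mu*(y+z5+z3))) / mu)) else 0)
            = (if x < z3 then
              (A z5 * Real.exp (-(mu*z4)) * Real.exp (-(mu*(y+z5))) / mu) *
                ((z3 - x) * Real.exp (-(2*mu*z3))) else 0) := by
          intro z3
          split_ifs with h h2 h2
          · have e1 : Real.exp (-(mu*(z3+z4))) * Real.exp (-(mu*(y+z5+z3)))
                = Real.exp (-(mu*z4)) * Real.exp (-(mu*(y+z5))) * Real.exp (-(2*mu*z3)) := by
              rw [← Real.exp_add, ← Real.exp_add, ← Real.exp_add]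
              congr 1
              ring
            linear_combination (z3 - x) * A z5 * e1 / mu
          · exact absurd h.1 h2
          · exact absurd ⟨h2, h4⟩ h
          · rfl
        simp_rw [hcong]
        rw [if_Ioi (fun z3 => (A z5 * Real.exp (-(mu*z4)) * Real.exp (-(mu*(y+z5))) / mu) *
              ((z3 - x) * Real.exp (-(2*mu*z3)))) hx,
          MeasureTheory.integral_const_mul, int_linexp_Ioi (by positivity) x]
      · rw [if_neg h4]
        have hcong : ∀ z3 : ℝ, (if x < z3 ∧ y < z4 then
              A z5 * Real.exp (-(mu*(z3+z4))) *
                ((z3 - x) * (Real.exp (-(mu*(y+z5+z3))) / mu)) else 0) = (0:ℝ) := by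
          intro z3
          rw [if_neg]
          intro h
          exact h4 h.2
        simp_rw [hcong, integral_zero]
    calc (∫ z4 in Set.Ioi (0:ℝ), ∫ z3 in Set.Ioi (0:ℝ),
        ∫ z2 in Set.Ioi (0:ℝ), ∫ z1 in Set.Ioi (0:ℝ),
        (if z1 - z5 > x ∧ z3 > x ∧ z4 > y ∧ z1 + z2 - z5 - z3 > y ∧ z5 + z3 > z1 then
          A z5 * Real.exp (-(mu * (z1 + z2 + z3 + z4))) else 0))
        = ∫ z4 in Set.Ioi (0:ℝ), (if y < z4 then
            A z5 * Real.exp (-(mu*z4)) * Real.exp (-(mu*(y+z5))) / mu *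
              (Real.exp (-(2*mu*x)) / (2*mu)^2) else 0) := by
          refine setIntegral_congr_fun measurableSet_Ioi fun z4 _ => ?_
          rw [← step3 z4]
          refine setIntegral_congr_fun measurableSet_Ioi fun z3 _ => key12 z4 z3
      _ = ∫ z4 in Set.Ioi (0:ℝ), (if y < z4 then
            (A z5 * Real.exp (-(mu*(y+z5))) / mu * (Real.exp (-(2*mu*x)) / (2*mu)^2)) *
              Real.exp (-(mu*z4)) else 0) := by
          refine setIntegral_congr_fun measurableSet_Ioi fun z4 _ => ?_
          split_ifs with h
          · ring
          · rfl
      _ = (A z5 * Real.exp (-(mu*(y+z5))) / mu * (Real.exp (-(2*mu*x)) / (2*mu)^2)) *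
            (Real.exp (-(mu*y)) / mu) := by
          rw [if_Ioi (fun z4 => (A z5 * Real.exp (-(mu*(y+z5))) / mu *
              (Real.exp (-(2*mu*x)) / (2*mu)^2)) * Real.exp (-(mu*z4))) hy,
            MeasureTheory.integral_const_mul, int_exp_Ioi hmu y]
      _ = C * (z5 ^ (k-1) * Real.exp (-((lam+mu) * z5))) := by
          rw [hA, hC]
          have e2 : Real.exp (-(lam*z5)) * Real.exp (-(mu*(y+z5))) * Real.exp (-(2*mu*x)) *
              Real.exp (-(mu*y))
              = Real.exp (-(2 * mu * (x + y))) * Real.exp (-((lam+mu)*z5)) := by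
            rw [← Real.exp_add, ← Real.exp_add, ← Real.exp_add, ← Real.exp_add]
            congr 1
            ring
          have l1 : lam ^ k * z5 ^ (k - 1) / Real.Gamma k * Real.exp (-(lam * z5)) * mu ^ 4 *
                Real.exp (-(mu*(y+z5))) / mu * (Real.exp (-(2*mu*x)) / (2*mu)^2) *
                (Real.exp (-(mu*y)) / mu)
              = lam ^ k * z5 ^ (k - 1) / Real.Gamma k * (mu ^ 4 / (4 * mu^4)) *
                (Real.exp (-(lam*z5)) * Real.exp (-(mu*(y+z5))) * Real.exp (-(2*mu*x)) *
                  Real.exp (-(mu*y))) := by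
            ring
          rw [l1, e2]
          have h4 : mu ^ 4 / (4 * mu^4) = 1/4 := by
            field_simp
          rw [h4]
          ring
  rw [setIntegral_congr_fun measurableSet_Ioi key5, MeasureTheory.integral_const_mul,
    int_gamma (by positivity) hk, hC]
  have hne : (lam + mu) ^ k ≠ 0 := by positivity
  field_simp
  rw [← mul_pow, mul_div_cancel₀ lam (by positivity : lam + mu ≠ 0)]
end

section
/- Let $\lambda, \mu > 0$ and let $k$ be a positive integer. Then the five-dimensional integral $\int_{\mathbb{R}_+^5} \mathbf{1}\{z_1 > z_5 + \max(z_3, x)\}\,\mathbf{1}\{z_3 > x\}\,\mathbf{1}\{z_2 > y\}\,\mathbf{1}\{z_3 + z_4 + z_5 - z_1 > y\}\, \frac{\lambda^k z_5^{k-1}}{\Gamma(k)} e^{-\lambda z_5} \mu^4 e^{-\mu(z_1+z_2+z_3+z_4)}\, dz_1\,dz_2\,dz_3\,dz_4\,dz_5$ equals $\frac{e^{-2\mu(x+y)}}{4}\left(\frac{\lambda}{\lambda+\mu}\right)^k$ for all $x, y \geq 0$. -/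
open MeasureTheory Real

lemma expIoi (a c : ℝ) (ha : 0 < a) :
    ∫ t in Set.Ioi c, Real.exp (-(a*t)) = Real.exp (-(a*c)) / a := by
  have := MeasureTheory.integral_comp_mul_left_Ioi (fun u => Real.exp (-u)) c ha
  simp only [smul_eq_mul, integral_exp_neg_Ioi] at this
  rw [this]; ring

lemma intIoiThresh (a yy C : ℝ) (ha : 0 < a) (hy : 0 ≤ yy) :
    ∫ t in Set.Ioi (0:ℝ), (if t > yy then C * Real.exp (-(a*t)) else 0)
      = C * Real.exp (-(a*yy)) / a := by
  have h1 : (fun t => if t > yy then C * Real.exp (-(a*t)) else 0)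
      = (Set.Ioi yy).indicator (fun t => C * Real.exp (-(a*t))) := by
    funext t; simp [Set.indicator_apply, Set.mem_Ioi]
  rw [h1, MeasureTheory.setIntegral_indicator measurableSet_Ioi,
    Set.inter_eq_self_of_subset_right (Set.Ioi_subset_Ioi hy),
    MeasureTheory.integral_const_mul, expIoi a yy ha, mul_div_assoc]

lemma intgThresh (a yy C : ℝ) (ha : 0 < a) :
    MeasureTheory.IntegrableOn
      (fun t => if t > yy then C * Real.exp (-(a*t)) else 0) (Set.Ioi (0:ℝ)) := by
  have h1 : (fun t => if t > yy then C * Real.exp (-(a*t)) else 0)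
      = (Set.Ioi yy).indicator (fun t => C * Real.exp (-(a*t))) := by
    funext t; simp [Set.indicator_apply, Set.mem_Ioi]
  rw [h1]
  have h2 : MeasureTheory.IntegrableOn (fun t : ℝ => C * Real.exp (-(a*t)))
      (Set.Ioi (0:ℝ)) := by
    have := (exp_neg_integrableOn_Ioi 0 ha).const_mul C
    simpa [neg_mul, MeasureTheory.IntegrableOn] using this
  exact h2.indicator measurableSet_Ioi

lemma expIoo (a p q : ℝ) (ha : a ≠ 0) :
    ∫ t in Set.Ioo p q, Real.exp (-(a*t))
      = (Real.exp (-(a*p)) - Real.exp (-(a*(max p q))))/a := by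
  rcases le_or_gt p q with hpq | hpq
  · rw [max_eq_right hpq, ← MeasureTheory.integral_Ioc_eq_integral_Ioo,
      ← intervalIntegral.integral_of_le hpq]
    have hd : ∀ t ∈ Set.uIcc p q, HasDerivAt (fun t => -Real.exp (-(a*t))/a)
        (Real.exp (-(a*t))) t := by
      intro t _
      have h1 : HasDerivAt (fun t : ℝ => -(a*t)) (-a) t := by
        simpa using ((hasDerivAt_id t).const_mul a).fun_neg
      have h2 := (Real.hasDerivAt_exp (-(a*t))).comp t h1
      have h3 := (h2.div_const a).fun_neg
      convert h3 using 1
      · rfl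
      · rfl
      · funext s; simp [Function.comp, neg_div]
      · rw [mul_neg, neg_div, neg_neg, mul_div_cancel_right₀ _ ha]
    rw [intervalIntegral.integral_eq_sub_of_hasDerivAt hd
      ((Real.continuous_exp.comp (by continuity)).intervalIntegrable p q)]
    field_simp
    ring
  · rw [max_eq_left hpq.le, Set.Ioo_eq_empty (by linarith)]
    simp

lemma layer1 (mu x y : ℝ) (hmu : 0 < mu) (hx : 0 ≤ x)
    (C z2 z3 z4 z5 : ℝ) (hz5 : 0 < z5) :
    ∫ z1 in Set.Ioi (0:ℝ),
      (if z1 > z5 + max z3 x ∧ z3 > x ∧ z2 > y ∧ z3 + z4 + z5 - z1 > y then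
        C * Real.exp (-(mu * z1)) else 0)
    = if z3 > x ∧ z2 > y ∧ z4 > y then
        C * (Real.exp (-(mu*(z5+z3))) - Real.exp (-(mu*(z3+z4+z5-y))))/mu else 0 := by
  by_cases hP : z3 > x ∧ z2 > y
  · have hmax : z5 + max z3 x = z5 + z3 := by rw [max_eq_left hP.1.le]
    have ha0 : 0 < z5 + z3 := by have := lt_of_le_of_lt hx hP.1; linarith
    have h1 : (fun z1 => if z1 > z5 + max z3 x ∧ z3 > x ∧ z2 > y ∧ z3 + z4 + z5 - z1 > y
          then C * Real.exp (-(mu * z1)) else 0)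
        = (Set.Ioo (z5+z3) (z3+z4+z5-y)).indicator (fun z1 => C * Real.exp (-(mu*z1))) := by
      funext t
      have hiff : (t > z5 + max z3 x ∧ z3 > x ∧ z2 > y ∧ z3 + z4 + z5 - t > y)
          ↔ t ∈ Set.Ioo (z5+z3) (z3+z4+z5-y) := by
        rw [Set.mem_Ioo, hmax]
        constructor
        · rintro ⟨h1, _, _, h4⟩; exact ⟨h1, by linarith⟩
        · rintro ⟨h1, h2⟩; exact ⟨h1, hP.1, hP.2, by linarith⟩
      rw [Set.indicator_apply, if_congr hiff rfl rfl]
    have hsub : Set.Ioo (z5+z3) (z3+z4+z5-y) ⊆ Set.Ioi (0:ℝ) := fun t ht => ha0.trans ht.1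
    rw [h1, MeasureTheory.setIntegral_indicator measurableSet_Ioo,
      Set.inter_eq_self_of_subset_right hsub,
      MeasureTheory.integral_const_mul, expIoo mu (z5+z3) (z3+z4+z5-y) hmu.ne']
    by_cases hz4 : z4 > y
    · rw [if_pos ⟨hP.1, hP.2, hz4⟩, max_eq_right (by linarith)]
      ring
    · rw [if_neg (by tauto), max_eq_left (by linarith)]
      simp
  · rw [if_neg (by tauto)]
    have h0 : ∀ t : ℝ, (if t > z5 + max z3 x ∧ z3 > x ∧ z2 > y ∧ z3 + z4 + z5 - t > y
        then C * Real.exp (-(mu * t)) else 0) = 0 := fun t => if_neg (by tauto)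
    simp only [h0, integral_zero]

theorem tandem_joint_second_term (lam mu : ℝ) (hlam : 0 < lam) (hmu : 0 < mu)
    (k : ℕ) (hk : 1 ≤ k) (x y : ℝ) (hx : 0 ≤ x) (hy : 0 ≤ y) :
    (∫ z5 in Set.Ioi (0:ℝ), ∫ z4 in Set.Ioi (0:ℝ), ∫ z3 in Set.Ioi (0:ℝ),
      ∫ z2 in Set.Ioi (0:ℝ), ∫ z1 in Set.Ioi (0:ℝ),
        (if z1 > z5 + max z3 x ∧ z3 > x ∧ z2 > y ∧ z3 + z4 + z5 - z1 > y then
          lam ^ k * z5 ^ (k - 1) / Real.Gamma k * Real.exp (-(lam * z5)) *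
            mu ^ 4 * Real.exp (-(mu * (z1 + z2 + z3 + z4)))
        else 0)) =
      Real.exp (-(2 * mu * (x + y))) / 4 * (lam / (lam + mu)) ^ k := by
  have h2mu : (0:ℝ) < 2 * mu := by positivity
  -- Step 1 : integrate out z1
  have step1 : (∫ z5 in Set.Ioi (0:ℝ), ∫ z4 in Set.Ioi (0:ℝ), ∫ z3 in Set.Ioi (0:ℝ),
      ∫ z2 in Set.Ioi (0:ℝ), ∫ z1 in Set.Ioi (0:ℝ),
        (if z1 > z5 + max z3 x ∧ z3 > x ∧ z2 > y ∧ z3 + z4 + z5 - z1 > y then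
          lam ^ k * z5 ^ (k - 1) / Real.Gamma k * Real.exp (-(lam * z5)) *
            mu ^ 4 * Real.exp (-(mu * (z1 + z2 + z3 + z4)))
        else 0)) =
      ∫ z5 in Set.Ioi (0:ℝ), ∫ z4 in Set.Ioi (0:ℝ), ∫ z3 in Set.Ioi (0:ℝ),
      ∫ z2 in Set.Ioi (0:ℝ),
        (if z3 > x ∧ z2 > y ∧ z4 > y then
          (lam ^ k * z5 ^ (k - 1) / Real.Gamma k * Real.exp (-(lam * z5)) *
            mu ^ 4 * Real.exp (-(mu * (z2 + z3 + z4)))) *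
          (Real.exp (-(mu*(z5+z3))) - Real.exp (-(mu*(z3+z4+z5-y))))/mu else 0) := by
    refine MeasureTheory.setIntegral_congr_fun measurableSet_Ioi fun z5 hz5 => ?_
    refine MeasureTheory.setIntegral_congr_fun measurableSet_Ioi fun z4 _ => ?_
    refine MeasureTheory.setIntegral_congr_fun measurableSet_Ioi fun z3 _ => ?_
    refine MeasureTheory.setIntegral_congr_fun measurableSet_Ioi fun z2 _ => ?_
    have e1 : ∀ z1 : ℝ,
        (if z1 > z5 + max z3 x ∧ z3 > x ∧ z2 > y ∧ z3 + z4 + z5 - z1 > y then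
          lam ^ k * z5 ^ (k - 1) / Real.Gamma k * Real.exp (-(lam * z5)) *
            mu ^ 4 * Real.exp (-(mu * (z1 + z2 + z3 + z4)))
        else 0) =
        (if z1 > z5 + max z3 x ∧ z3 > x ∧ z2 > y ∧ z3 + z4 + z5 - z1 > y then
          (lam ^ k * z5 ^ (k - 1) / Real.Gamma k * Real.exp (-(lam * z5)) *
            mu ^ 4 * Real.exp (-(mu * (z2 + z3 + z4)))) * Real.exp (-(mu * z1))
        else 0) := by
      intro z1
      split_ifs with h
      · rw [show -(mu * (z1 + z2 + z3 + z4)) = -(mu*z1) + -(mu*(z2+z3+z4)) by ring,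
          Real.exp_add]
        ring
      · rfl
    simp only [e1]
    exact layer1 mu x y hmu hx _ z2 z3 z4 z5 hz5
  -- Step 2 : integrate out z2
  have step2 : (∫ z5 in Set.Ioi (0:ℝ), ∫ z4 in Set.Ioi (0:ℝ), ∫ z3 in Set.Ioi (0:ℝ),
      ∫ z2 in Set.Ioi (0:ℝ),
        (if z3 > x ∧ z2 > y ∧ z4 > y then
          (lam ^ k * z5 ^ (k - 1) / Real.Gamma k * Real.exp (-(lam * z5)) *
            mu ^ 4 * Real.exp (-(mu * (z2 + z3 + z4)))) *
          (Real.exp (-(mu*(z5+z3))) - Real.exp (-(mu*(z3+z4+z5-y))))/mu else 0)) =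
      ∫ z5 in Set.Ioi (0:ℝ), ∫ z4 in Set.Ioi (0:ℝ), ∫ z3 in Set.Ioi (0:ℝ),
        (if z3 > x ∧ z4 > y then
          (lam ^ k * z5 ^ (k - 1) / Real.Gamma k * Real.exp (-(lam * z5)) *
            mu ^ 4 * Real.exp (-(mu * (z3 + z4))) *
          (Real.exp (-(mu*(z5+z3))) - Real.exp (-(mu*(z3+z4+z5-y))))/mu) *
          Real.exp (-(mu*y)) / mu else 0) := by
    refine MeasureTheory.setIntegral_congr_fun measurableSet_Ioi fun z5 _ => ?_
    refine MeasureTheory.setIntegral_congr_fun measurableSet_Ioi fun z4 _ => ?_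
    refine MeasureTheory.setIntegral_congr_fun measurableSet_Ioi fun z3 _ => ?_
    by_cases hP : z3 > x ∧ z4 > y
    · have e2 : ∀ z2 : ℝ,
          (if z3 > x ∧ z2 > y ∧ z4 > y then
            (lam ^ k * z5 ^ (k - 1) / Real.Gamma k * Real.exp (-(lam * z5)) *
              mu ^ 4 * Real.exp (-(mu * (z2 + z3 + z4)))) *
            (Real.exp (-(mu*(z5+z3))) - Real.exp (-(mu*(z3+z4+z5-y))))/mu else 0) =
          (if z2 > y then
            (lam ^ k * z5 ^ (k - 1) / Real.Gamma k * Real.exp (-(lam * z5)) *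
              mu ^ 4 * Real.exp (-(mu * (z3 + z4))) *
            (Real.exp (-(mu*(z5+z3))) - Real.exp (-(mu*(z3+z4+z5-y))))/mu) *
            Real.exp (-(mu*z2)) else 0) := by
        intro z2
        by_cases h2 : z2 > y
        · rw [if_pos ⟨hP.1, h2, hP.2⟩, if_pos h2,
            show -(mu * (z2 + z3 + z4)) = -(mu*z2) + -(mu*(z3+z4)) by ring, Real.exp_add]
          ring
        · rw [if_neg (by tauto), if_neg h2]
      simp only [e2]
      rw [intIoiThresh mu y _ hmu hy, if_pos hP]
    · have e2 : ∀ z2 : ℝ,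
          (if z3 > x ∧ z2 > y ∧ z4 > y then
            (lam ^ k * z5 ^ (k - 1) / Real.Gamma k * Real.exp (-(lam * z5)) *
              mu ^ 4 * Real.exp (-(mu * (z2 + z3 + z4)))) *
            (Real.exp (-(mu*(z5+z3))) - Real.exp (-(mu*(z3+z4+z5-y))))/mu else 0) = 0 :=
        fun z2 => if_neg (by tauto)
      simp only [e2, integral_zero]
      rw [if_neg hP]
  -- Step 3 : integrate out z3
  have step3 : (∫ z5 in Set.Ioi (0:ℝ), ∫ z4 in Set.Ioi (0:ℝ), ∫ z3 in Set.Ioi (0:ℝ),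
        (if z3 > x ∧ z4 > y then
          (lam ^ k * z5 ^ (k - 1) / Real.Gamma k * Real.exp (-(lam * z5)) *
            mu ^ 4 * Real.exp (-(mu * (z3 + z4))) *
          (Real.exp (-(mu*(z5+z3))) - Real.exp (-(mu*(z3+z4+z5-y))))/mu) *
          Real.exp (-(mu*y)) / mu else 0)) =
      ∫ z5 in Set.Ioi (0:ℝ), ∫ z4 in Set.Ioi (0:ℝ),
        (if z4 > y then
          (lam ^ k * z5 ^ (k - 1) / Real.Gamma k * Real.exp (-(lam * z5)) *
            mu ^ 4 * Real.exp (-(mu * z4)) *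
          (Real.exp (-(mu*z5)) - Real.exp (-(mu*(z4+z5-y))))/mu *
          Real.exp (-(mu*y)) / mu) * Real.exp (-(2*mu*x)) / (2*mu) else 0) := by
    refine MeasureTheory.setIntegral_congr_fun measurableSet_Ioi fun z5 _ => ?_
    refine MeasureTheory.setIntegral_congr_fun measurableSet_Ioi fun z4 _ => ?_
    by_cases hP : z4 > y
    · have e3 : ∀ z3 : ℝ,
          (if z3 > x ∧ z4 > y then
            (lam ^ k * z5 ^ (k - 1) / Real.Gamma k * Real.exp (-(lam * z5)) *
              mu ^ 4 * Real.exp (-(mu * (z3 + z4))) *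
            (Real.exp (-(mu*(z5+z3))) - Real.exp (-(mu*(z3+z4+z5-y))))/mu) *
            Real.exp (-(mu*y)) / mu else 0) =
          (if z3 > x then
            (lam ^ k * z5 ^ (k - 1) / Real.Gamma k * Real.exp (-(lam * z5)) *
              mu ^ 4 * Real.exp (-(mu * z4)) *
            (Real.exp (-(mu*z5)) - Real.exp (-(mu*(z4+z5-y))))/mu *
            Real.exp (-(mu*y)) / mu) * Real.exp (-(2*mu*z3)) else 0) := by
        intro z3
        by_cases h3 : z3 > x
        · rw [if_pos ⟨h3, hP⟩, if_pos h3,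
            show -(mu * (z3 + z4)) = -(mu*z3) + -(mu*z4) by ring, Real.exp_add,
            show -(mu * (z5 + z3)) = -(mu*z5) + -(mu*z3) by ring, Real.exp_add,
            show -(mu * (z3 + z4 + z5 - y)) = -(mu*z3) + -(mu*(z4+z5-y)) by ring,
            Real.exp_add,
            show -(2*mu*z3) = -(mu*z3) + -(mu*z3) by ring, Real.exp_add]
          ring
        · rw [if_neg (by tauto), if_neg h3]
      simp only [e3]
      rw [intIoiThresh (2*mu) x _ h2mu hx, if_pos hP]
    · have e3 : ∀ z3 : ℝ,
          (if z3 > x ∧ z4 > y then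
            (lam ^ k * z5 ^ (k - 1) / Real.Gamma k * Real.exp (-(lam * z5)) *
              mu ^ 4 * Real.exp (-(mu * (z3 + z4))) *
            (Real.exp (-(mu*(z5+z3))) - Real.exp (-(mu*(z3+z4+z5-y))))/mu) *
            Real.exp (-(mu*y)) / mu else 0) = 0 :=
        fun z3 => if_neg (by tauto)
      simp only [e3, integral_zero]
      rw [if_neg hP]
  -- Step 4 : integrate out z4
  have step4 : (∫ z5 in Set.Ioi (0:ℝ), ∫ z4 in Set.Ioi (0:ℝ),
        (if z4 > y then
          (lam ^ k * z5 ^ (k - 1) / Real.Gamma k * Real.exp (-(lam * z5)) *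
            mu ^ 4 * Real.exp (-(mu * z4)) *
          (Real.exp (-(mu*z5)) - Real.exp (-(mu*(z4+z5-y))))/mu *
          Real.exp (-(mu*y)) / mu) * Real.exp (-(2*mu*x)) / (2*mu) else 0)) =
      ∫ z5 in Set.Ioi (0:ℝ),
        lam ^ k * z5 ^ (k - 1) / Real.Gamma k * Real.exp (-(lam * z5)) *
          Real.exp (-(mu*z5)) * Real.exp (-(2*mu*x)) * Real.exp (-(2*mu*y)) / 4 := by
    refine MeasureTheory.setIntegral_congr_fun measurableSet_Ioi fun z5 _ => ?_
    set A1 : ℝ := lam ^ k * z5 ^ (k - 1) / Real.Gamma k * Real.exp (-(lam * z5)) *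
        mu ^ 4 * Real.exp (-(mu*z5)) / mu * Real.exp (-(mu*y)) / mu *
        Real.exp (-(2*mu*x)) / (2*mu) with hA1
    set A2 : ℝ := lam ^ k * z5 ^ (k - 1) / Real.Gamma k * Real.exp (-(lam * z5)) *
        mu ^ 4 * Real.exp (-(mu*(z5-y))) / mu * Real.exp (-(mu*y)) / mu *
        Real.exp (-(2*mu*x)) / (2*mu) with hA2
    have e4 : ∀ z4 : ℝ,
        (if z4 > y then
          (lam ^ k * z5 ^ (k - 1) / Real.Gamma k * Real.exp (-(lam * z5)) *
            mu ^ 4 * Real.exp (-(mu * z4)) *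
          (Real.exp (-(mu*z5)) - Real.exp (-(mu*(z4+z5-y))))/mu *
          Real.exp (-(mu*y)) / mu) * Real.exp (-(2*mu*x)) / (2*mu) else 0) =
        (if z4 > y then A1 * Real.exp (-(mu*z4)) else 0) -
        (if z4 > y then A2 * Real.exp (-(2*mu*z4)) else 0) := by
      intro z4
      by_cases h4 : z4 > y
      · rw [if_pos h4, if_pos h4, if_pos h4, hA1, hA2,
          show -(mu * (z4 + z5 - y)) = -(mu*z4) + -(mu*(z5-y)) by ring, Real.exp_add,
          show -(2*mu*z4) = -(mu*z4) + -(mu*z4) by ring, Real.exp_add]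
        ring
      · rw [if_neg h4, if_neg h4, if_neg h4, sub_zero]
    simp only [e4]
    rw [MeasureTheory.integral_sub (intgThresh mu y A1 hmu) (intgThresh (2*mu) y A2 h2mu),
      intIoiThresh mu y A1 hmu hy, intIoiThresh (2*mu) y A2 h2mu hy, hA1, hA2,
      show -(mu*(z5-y)) = -(mu*z5) - -(mu*y) by ring, Real.exp_sub,
      show -(2*mu*y) = -(mu*y) + -(mu*y) by ring, Real.exp_add]
    field_simp
    ring
  -- Step 5 : integrate out z5
  rw [step1, step2, step3, step4]
  have h0k : (0:ℝ) < (k:ℝ) := by exact_mod_cast hk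
  have hlm : (0:ℝ) < lam + mu := by linarith
  have hGamma : ∫ t in Set.Ioi (0:ℝ), t ^ (k - 1) * Real.exp (-((lam+mu)*t))
      = (1/(lam+mu)) ^ k * Real.Gamma k := by
    have h := Real.integral_rpow_mul_exp_neg_mul_Ioi h0k hlm
    rw [← Real.rpow_natCast (1/(lam+mu)) k]
    rw [← h]
    refine MeasureTheory.setIntegral_congr_fun measurableSet_Ioi fun t ht => ?_
    rw [← Real.rpow_natCast t (k-1), Nat.cast_sub hk, Nat.cast_one]
  have e5 : ∀ z5 : ℝ,
      lam ^ k * z5 ^ (k - 1) / Real.Gamma k * Real.exp (-(lam * z5)) *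
        Real.exp (-(mu*z5)) * Real.exp (-(2*mu*x)) * Real.exp (-(2*mu*y)) / 4 =
      (lam ^ k / Real.Gamma k * Real.exp (-(2*mu*x)) * Real.exp (-(2*mu*y)) / 4) *
        (z5 ^ (k - 1) * Real.exp (-((lam+mu)*z5))) := by
    intro z5
    rw [show -((lam+mu)*z5) = -(lam*z5) + -(mu*z5) by ring, Real.exp_add]
    ring
  simp only [e5]
  rw [MeasureTheory.integral_const_mul, hGamma]
  have hG : Real.Gamma k ≠ 0 := (Real.Gamma_pos_of_pos h0k).ne'
  rw [show -(2*mu*(x+y)) = -(2*mu*x) + -(2*mu*y) by ring, Real.exp_add, div_pow, div_pow,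
    one_pow]
  field_simp
end

section
/- In the $(M/M/\infty)^2$ tandem queue with Poisson($\lambda$) arrivals and i.i.d. exponential($\mu$) service times at both stations, the joint tail distribution of the overlap times of customers $n$ and $n+k$ satisfies $\mathbb{P}(O^{(1)}_{n,n+k} > x, O^{(2)}_{n,n+k} > y) = \frac{e^{-2\mu(x+y)}}{2}\left(\frac{\lambda}{\lambda+\mu}\right)^k$ for all $x, y \geq 0$. -/
open MeasureTheory ProbabilityTheory Real

variable {Ω : Type*}

/-- Arrival time of customer `n`: the sum of the first `n` inter-arrival times. -/
noncomputable def arrivalTime (τ : ℕ → Ω → ℝ) (n : ℕ) (ω : Ω) : ℝ :=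
  ∑ i ∈ Finset.range n, τ i ω

/-- Departure time of customer `n` from station 1. -/
noncomputable def dep1 (τ S1 : ℕ → Ω → ℝ) (n : ℕ) (ω : Ω) : ℝ :=
  arrivalTime τ n ω + S1 n ω

/-- Departure time of customer `n` from station 2. -/
noncomputable def dep2 (τ S1 S2 : ℕ → Ω → ℝ) (n : ℕ) (ω : Ω) : ℝ :=
  dep1 τ S1 n ω + S2 n ω

/-- Overlap time of customers `a` and `b` at station 1. -/
noncomputable def ovl1 (τ S1 : ℕ → Ω → ℝ) (a b : ℕ) (ω : Ω) : ℝ :=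
  max 0 (min (dep1 τ S1 a ω) (dep1 τ S1 b ω) - max (arrivalTime τ a ω) (arrivalTime τ b ω))

/-- Overlap time of customers `a` and `b` at station 2. -/
noncomputable def ovl2 (τ S1 S2 : ℕ → Ω → ℝ) (a b : ℕ) (ω : Ω) : ℝ :=
  max 0 (min (dep2 τ S1 S2 a ω) (dep2 τ S1 S2 b ω) - max (dep1 τ S1 a ω) (dep1 τ S1 b ω))

open Set

namespace TandemAux

lemma indicator_eq_ite {f : ℝ → ENNReal} (r : ℝ) :
    (fun u => (if r < u then (1:ENNReal) else 0) * f u) = (Ioi r).indicator f := by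
  funext u
  by_cases h : r < u <;> simp [Set.indicator_apply, h, mem_Ioi]

/-- basic: ∫_{(0,∞)} e^{-cu} du = 1/c in lintegral form -/
lemma lint_E1 {c : ℝ} (hc : 0 < c) :
    ∫⁻ u in Ioi (0:ℝ), ENNReal.ofReal (exp (-(c*u))) = ENNReal.ofReal (1/c) := by
  have h1 := lintegral_exponentialPDF_eq_one hc
  have h2 : (fun x => exponentialPDF c x)
      = (Ici (0:ℝ)).indicator (fun x => ENNReal.ofReal c * ENNReal.ofReal (exp (-(c*x)))) := by
    funext u
    by_cases h : 0 ≤ u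
    · simp [Set.indicator_apply, h, exponentialPDF_of_nonneg h, ENNReal.ofReal_mul hc.le]
    · simp [Set.indicator_apply, h, exponentialPDF_of_neg (lt_of_not_ge h)]
  have h3 : ∫⁻ x, (Ici (0:ℝ)).indicator
      (fun x => ENNReal.ofReal c * ENNReal.ofReal (exp (-(c*x)))) x = 1 := by
    rw [← h1]; exact lintegral_congr fun x => (congrFun h2 x).symm
  rw [lintegral_indicator measurableSet_Ici _,
    ← Measure.restrict_congr_set (Ioi_ae_eq_Ici (a := (0:ℝ))),
    lintegral_const_mul' _ _ ENNReal.ofReal_ne_top] at h3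
  have hc0 : ENNReal.ofReal c ≠ 0 := by simp only [ne_eq, ENNReal.ofReal_eq_zero, not_le]; positivity
  have := congrArg (fun z => (ENNReal.ofReal c)⁻¹ * z) h3
  simp only [← mul_assoc, ENNReal.inv_mul_cancel hc0 ENNReal.ofReal_ne_top, one_mul, mul_one] at this
  rw [this, one_div, ENNReal.ofReal_inv_of_pos hc]

/-- ∫_{(0,∞)} u e^{-cu} du = 1/c² -/
lemma lint_E2 {c : ℝ} (hc : 0 < c) :
    ∫⁻ u in Ioi (0:ℝ), ENNReal.ofReal (u * exp (-(c*u))) = ENNReal.ofReal (1/c^2) := by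
  have h1 := lintegral_gammaPDF_eq_one (a := 2) (r := c) two_pos hc
  have h2 : (fun x => gammaPDF 2 c x)
      = (Ici (0:ℝ)).indicator (fun x => ENNReal.ofReal (c^2) * ENNReal.ofReal (x * exp (-(c*x)))) := by
    funext u
    by_cases h : 0 ≤ u
    · rw [gammaPDF_of_nonneg h]
      have h3 : ((2:ℝ)-1) = 1 := by norm_num
      have h4 : c ^ (2:ℝ) = c ^ 2 := by
        rw [show (2:ℝ) = ((2:ℕ):ℝ) by norm_num, Real.rpow_natCast]
      rw [h3, h4, Real.Gamma_two, rpow_one]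
      simp [Set.indicator_apply, h, ← ENNReal.ofReal_mul (by positivity : (0:ℝ) ≤ c^2)]
      ring_nf
    · simp [Set.indicator_apply, h, gammaPDF_of_neg (lt_of_not_ge h)]
  have h3 : ∫⁻ x, (Ici (0:ℝ)).indicator
      (fun x => ENNReal.ofReal (c^2) * ENNReal.ofReal (x * exp (-(c*x)))) x = 1 := by
    rw [← h1]; exact lintegral_congr fun x => (congrFun h2 x).symm
  rw [lintegral_indicator measurableSet_Ici _,
    ← Measure.restrict_congr_set (Ioi_ae_eq_Ici (a := (0:ℝ))),
    lintegral_const_mul' _ _ ENNReal.ofReal_ne_top] at h3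
  have hc0 : ENNReal.ofReal (c^2) ≠ 0 := by
    simp only [ne_eq, ENNReal.ofReal_eq_zero, not_le]; positivity
  have := congrArg (fun z => (ENNReal.ofReal (c^2))⁻¹ * z) h3
  simp only [← mul_assoc, ENNReal.inv_mul_cancel hc0 ENNReal.ofReal_ne_top, one_mul, mul_one] at this
  rw [this, one_div, ENNReal.ofReal_inv_of_pos (by positivity)]

/-- translation for set lintegrals over Ioi -/
lemma lint_translate (f : ℝ → ENNReal) (r : ℝ) :
    ∫⁻ u in Ioi r, f u = ∫⁻ u in Ioi (0:ℝ), f (u + r) := by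
  have hmp : MeasurePreserving (fun x : ℝ => x + r) volume volume :=
    measurePreserving_add_right volume r
  have hemb : MeasurableEmbedding (fun x : ℝ => x + r) :=
    (MeasurableEquiv.addRight r).measurableEmbedding
  have hpre : (fun x : ℝ => x + r) ⁻¹' (Ioi r) = Ioi (0:ℝ) := by
    ext u; simp [mem_Ioi]
  rw [← hpre, MeasurePreserving.setLIntegral_comp_preimage_emb hmp hemb]

lemma lint_L {c : ℝ} (hc : 0 < c) (r : ℝ) :
    ∫⁻ u in Ioi r, ENNReal.ofReal (exp (-(c*u))) = ENNReal.ofReal (exp (-(c*r)) / c) := by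
  rw [lint_translate]
  have : ∀ u : ℝ, ENNReal.ofReal (exp (-(c*(u+r))))
      = ENNReal.ofReal (exp (-(c*r))) * ENNReal.ofReal (exp (-(c*u))) := by
    intro u
    rw [← ENNReal.ofReal_mul (exp_nonneg _), ← exp_add]
    ring_nf
  simp_rw [this]
  rw [lintegral_const_mul' _ _ ENNReal.ofReal_ne_top, lint_E1 hc,
    ← ENNReal.ofReal_mul (exp_nonneg _)]
  ring_nf

lemma lint_L2 {c : ℝ} (hc : 0 < c) (r : ℝ) :
    ∫⁻ u in Ioi r, ENNReal.ofReal ((u - r) * exp (-(c*u)))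
      = ENNReal.ofReal (exp (-(c*r)) / c^2) := by
  rw [lint_translate]
  have : ∀ u : ℝ, ENNReal.ofReal ((u + r - r) * exp (-(c*(u+r))))
      = ENNReal.ofReal (exp (-(c*r))) * ENNReal.ofReal (u * exp (-(c*u))) := by
    intro u
    rw [← ENNReal.ofReal_mul (exp_nonneg _)]
    congr 1
    rw [add_sub_cancel_right, show -(c*(u+r)) = -(c*u) + -(c*r) by ring, exp_add]
    ring
  simp_rw [this]
  rw [lintegral_const_mul' _ _ ENNReal.ofReal_ne_top, lint_E2 hc,
    ← ENNReal.ofReal_mul (exp_nonneg _)]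
  ring_nf

lemma expMeasure_tail {c r : ℝ} (hc : 0 < c) (hr : 0 ≤ r) :
    expMeasure c (Ioi r) = ENNReal.ofReal (exp (-(c*r))) := by
  rw [expMeasure, gammaMeasure, withDensity_apply _ measurableSet_Ioi]
  have : ∫⁻ u in Ioi r, gammaPDF 1 c u
      = ∫⁻ u in Ioi r, ENNReal.ofReal c * ENNReal.ofReal (exp (-(c*u))) := by
    apply setLIntegral_congr_fun measurableSet_Ioi
    intro u hu
    have h0 : (0:ℝ) ≤ u := le_trans hr (le_of_lt hu)
    rw [show gammaPDF 1 c u = exponentialPDF c u from rfl,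
      exponentialPDF_of_nonneg h0, ENNReal.ofReal_mul hc.le]
  rw [this, lintegral_const_mul' _ _ ENNReal.ofReal_ne_top, lint_L hc,
    ← ENNReal.ofReal_mul hc.le, mul_div_cancel₀ _ hc.ne']

lemma expMeasure_eq (c : ℝ) : expMeasure c = volume.withDensity (exponentialPDF c) := rfl

lemma measurable_exponentialPDF (c : ℝ) : Measurable (exponentialPDF c) :=
  (measurable_exponentialPDFReal c).ennreal_ofReal

lemma lint_prim {c r : ℝ} (hr : 0 ≤ r) {f : ℝ → ENNReal} (hf : Measurable f) :
    ∫⁻ u, (if r < u then (1:ENNReal) else 0) * f u ∂expMeasure c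
      = ∫⁻ u in Ioi r, ENNReal.ofReal (c * exp (-(c*u))) * f u ∂volume := by
  rw [indicator_eq_ite r, lintegral_indicator measurableSet_Ioi _, expMeasure_eq,
    restrict_withDensity measurableSet_Ioi,
    lintegral_withDensity_eq_lintegral_mul _ (measurable_exponentialPDF c) hf]
  apply setLIntegral_congr_fun measurableSet_Ioi
  intro u hu
  have h0 : (0:ℝ) ≤ u := le_trans hr (le_of_lt hu)
  simp only [Pi.mul_apply, exponentialPDF_of_nonneg h0]

lemma lint_tail {c φ : ℝ} (hc : 0 < c) (hφ : 0 ≤ φ) :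
    ∫⁻ u, (if φ < u then (1:ENNReal) else 0) ∂expMeasure c = ENNReal.ofReal (exp (-(c*φ))) := by
  have h : (fun u : ℝ => (if φ < u then (1:ENNReal) else 0)) = (Ioi φ).indicator 1 := by
    funext u; by_cases h : φ < u <;> simp [Set.indicator_apply, h, mem_Ioi]
  rw [h, lintegral_indicator_one measurableSet_Ioi, expMeasure_tail hc hφ]

lemma lint_stageB {mu x t a y : ℝ} (hmu : 0 < mu) (hx : 0 ≤ x) (hax : t + x < a) :
    ∫⁻ b, (if x < b then (1:ENNReal) else 0)
        * ENNReal.ofReal (exp (-(mu*(2*max a (t+b) - a - t - b + 2*y)))) ∂expMeasure mu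
      = ENNReal.ofReal (exp (-(mu*(a-t))) * exp (-(2*mu*y)) * (mu*(a-t-x) + 1/2)) := by
  rw [lint_prim hx (Measurable.ennreal_ofReal (by fun_prop))]
  have hsplit : Ioi x = Ioc x (a-t) ∪ Ioi (a-t) :=
    (Ioc_union_Ioi_eq_Ioi (by linarith)).symm
  rw [hsplit, lintegral_union measurableSet_Ioi (Ioc_disjoint_Ioi le_rfl)]
  have h1 : ∫⁻ b in Ioc x (a-t),
      ENNReal.ofReal (mu * exp (-(mu*b))) * ENNReal.ofReal (exp (-(mu*(2*max a (t+b) - a - t - b + 2*y))))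
      = ENNReal.ofReal ((mu * exp (-(mu*(a - t + 2*y)))) * (a - t - x)) := by
    rw [setLIntegral_congr_fun measurableSet_Ioc
      (g := fun _ => ENNReal.ofReal (mu * exp (-(mu*(a - t + 2*y)))))
      (fun b hb => ?_), setLIntegral_const, Real.volume_Ioc,
      ← ENNReal.ofReal_mul (by positivity)]
    have hmax : max a (t+b) = a := max_eq_left (by have := hb.2; linarith)
    rw [← ENNReal.ofReal_mul (by positivity), hmax]
    congr 1
    rw [mul_assoc, ← exp_add]
    congr 2
    ring
  have h2 : ∫⁻ b in Ioi (a-t),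
      ENNReal.ofReal (mu * exp (-(mu*b))) * ENNReal.ofReal (exp (-(mu*(2*max a (t+b) - a - t - b + 2*y))))
      = ENNReal.ofReal ((mu * exp (-(mu*(t - a + 2*y)))) * (exp (-(2*mu*(a-t))) / (2*mu))) := by
    rw [setLIntegral_congr_fun measurableSet_Ioi
      (g := fun b => ENNReal.ofReal (mu * exp (-(mu*(t - a + 2*y)))) * ENNReal.ofReal (exp (-(2*mu*b))))
      (fun b hb => ?_),
      lintegral_const_mul' _ _ ENNReal.ofReal_ne_top, lint_L (by positivity) (a-t),
      ← ENNReal.ofReal_mul (by positivity)]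
    have hmax : max a (t+b) = t + b := max_eq_right (by simp only [mem_Ioi] at hb; linarith)
    show ENNReal.ofReal (mu * exp (-(mu*b))) * ENNReal.ofReal (exp (-(mu*(2*max a (t+b) - a - t - b + 2*y))))
      = ENNReal.ofReal (mu * exp (-(mu*(t - a + 2*y)))) * ENNReal.ofReal (exp (-(2*mu*b)))
    rw [← ENNReal.ofReal_mul (by positivity), ← ENNReal.ofReal_mul (by positivity), hmax]
    congr 1
    rw [mul_assoc, ← exp_add, mul_assoc, ← exp_add]
    congr 2
    ring
  rw [h1, h2, ← ENNReal.ofReal_add (mul_nonneg (by positivity) (by linarith)) (by positivity)]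
  congr 1
  have E1 : exp (-(mu*(a-t+2*y))) = exp (-(mu*(a-t))) * exp (-(2*mu*y)) := by
    rw [← exp_add]; congr 1; ring
  have E2 : exp (-(mu*(t-a+2*y))) * exp (-(2*mu*(a-t))) = exp (-(mu*(a-t))) * exp (-(2*mu*y)) := by
    rw [← exp_add, ← exp_add]; congr 1; ring
  rw [mul_div_assoc', mul_assoc mu (exp (-(mu*(t-a+2*y)))), E2, E1]
  field_simp

lemma lint_stageA {mu x t y : ℝ} (hmu : 0 < mu) (hx : 0 ≤ x) (ht : 0 ≤ t) :
    ∫⁻ a, (if t + x < a then (1:ENNReal) else 0)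
        * ENNReal.ofReal (exp (-(mu*(a-t))) * exp (-(2*mu*y)) * (mu*(a-t-x) + 1/2)) ∂expMeasure mu
      = ENNReal.ofReal (exp (-(mu*t)) * (exp (-(2*mu*(x+y))) / 2)) := by
  rw [lint_prim (by positivity) (Measurable.ennreal_ofReal (by fun_prop))]
  have key : ∀ a ∈ Ioi (t+x),
      ENNReal.ofReal (mu * exp (-(mu*a))) * ENNReal.ofReal (exp (-(mu*(a-t))) * exp (-(2*mu*y)) * (mu*(a-t-x) + 1/2))
      = ENNReal.ofReal (mu^2 * exp (mu*t) * exp (-(2*mu*y))) * ENNReal.ofReal ((a - (t+x)) * exp (-(2*mu*a)))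
        + ENNReal.ofReal ((mu/2) * exp (mu*t) * exp (-(2*mu*y))) * ENNReal.ofReal (exp (-(2*mu*a))) := by
    intro a ha
    simp only [mem_Ioi] at ha
    rw [← ENNReal.ofReal_mul (by positivity), ← ENNReal.ofReal_mul (by positivity),
      ← ENNReal.ofReal_mul (by positivity),
      ← ENNReal.ofReal_add (mul_nonneg (by positivity) (mul_nonneg (by linarith) (exp_nonneg _))) (by positivity)]
    congr 1
    have h1 : exp (-(mu*a)) * exp (-(mu*(a-t))) = exp (mu*t) * exp (-(2*mu*a)) := by
      rw [← exp_add, ← exp_add]; congr 1; ring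
    linear_combination (mu * exp (-(2*mu*y)) * (mu*(a-t-x)+1/2)) * h1
  rw [setLIntegral_congr_fun measurableSet_Ioi key, lintegral_add_left
    (by exact (measurable_const.mul (Measurable.ennreal_ofReal (by fun_prop)))),
    lintegral_const_mul' _ _ ENNReal.ofReal_ne_top,
    lintegral_const_mul' _ _ ENNReal.ofReal_ne_top,
    lint_L2 (by positivity) (t+x), lint_L (by positivity) (t+x),
    ← ENNReal.ofReal_mul (by positivity), ← ENNReal.ofReal_mul (by positivity),
    ← ENNReal.ofReal_add (by positivity) (by positivity)]
  congr 1
  have E4 : exp (mu*t) * exp (-(2*mu*(t+x))) = exp (-(mu*t)) * exp (-(2*mu*(x+y))) * exp (2*mu*y) := by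
    rw [← exp_add, ← exp_add, ← exp_add]; congr 1; ring
  have E5 : exp (-(2*mu*y)) * exp (2*mu*y) = 1 := by
    rw [← exp_add]; simp
  have E6 : exp (mu*t) * exp (-(2*mu*y)) * exp (-(2*mu*(t+x))) = exp (-(mu*t)) * exp (-(2*mu*(x+y))) := by
    rw [← exp_add, ← exp_add, ← exp_add]; congr 1; ring
  generalize exp (mu*t) = A at E6 ⊢
  generalize exp (-(2*mu*y)) = B at E6 ⊢
  generalize exp (-(2*mu*(t+x))) = C at E6 ⊢
  generalize exp (-(mu*t)) = D at E6 ⊢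
  generalize exp (-(2*mu*(x+y))) = G at E6 ⊢
  field_simp
  linear_combination 2 * E6

lemma lint_laplace {l c : ℝ} (hl : 0 < l) (hc : 0 ≤ c) :
    ∫⁻ t, ENNReal.ofReal (exp (-(c*t))) ∂expMeasure l = ENNReal.ofReal (l/(l+c)) := by
  rw [expMeasure_eq, lintegral_withDensity_eq_lintegral_mul _ (measurable_exponentialPDF l)
    (Measurable.ennreal_ofReal (by fun_prop))]
  have h2 : (fun x => (exponentialPDF l * fun t => ENNReal.ofReal (exp (-(c*t)))) x)
      = (Ici (0:ℝ)).indicator (fun x => ENNReal.ofReal l * ENNReal.ofReal (exp (-((l+c)*x)))) := by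
    funext u
    by_cases h : 0 ≤ u
    · simp only [Pi.mul_apply, exponentialPDF_of_nonneg h, Set.indicator_apply, mem_Ici, if_pos h]
      rw [← ENNReal.ofReal_mul (by positivity), ← ENNReal.ofReal_mul (by positivity)]
      congr 1
      rw [mul_assoc, ← exp_add]
      congr 2
      ring
    · simp [Set.indicator_apply, h, exponentialPDF_of_neg (lt_of_not_ge h)]
  rw [show (fun x => (exponentialPDF l * fun t => ENNReal.ofReal (exp (-(c*t)))) x)
      = fun x => (exponentialPDF l * fun t => ENNReal.ofReal (exp (-(c*t)))) x from rfl]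
  rw [h2, lintegral_indicator measurableSet_Ici _,
    ← Measure.restrict_congr_set (Ioi_ae_eq_Ici (a := (0:ℝ))),
    lintegral_const_mul' _ _ ENNReal.ofReal_ne_top, lint_L (by positivity) 0,
    ← ENNReal.ofReal_mul hl.le]
  congr 1
  rw [mul_zero, neg_zero, exp_zero]
  field_simp

lemma map_tuple_eq_pi {Ω ι κ : Type*} [MeasurableSpace Ω] [Fintype κ]
    (P : Measure Ω) [IsProbabilityMeasure P]
    (f : ι → Ω → ℝ) (hindep : iIndepFun f P)
    (e : κ → ι) (he : Function.Injective e)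
    (ν : κ → Measure ℝ) [∀ j, IsProbabilityMeasure (ν j)]
    (hlaw : ∀ j, P.map (f (e j)) = ν j) :
    P.map (fun ω j => f (e j) ω) = Measure.pi ν := by
  classical
  have haem : ∀ j, AEMeasurable (f (e j)) P := by
    intro j
    by_contra h
    have h0 := hlaw j
    rw [Measure.map_of_not_aemeasurable h] at h0
    have h1 := congrArg (fun m : Measure ℝ => m univ) h0
    simp [measure_univ] at h1
  have hg : AEMeasurable (fun ω j => f (e j) ω) P := by
    refine ⟨fun ω j => (haem j).mk _ ω, measurable_pi_lambda _ (fun j => (haem j).measurable_mk), ?_⟩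
    have hae : ∀ᵐ ω ∂P, ∀ j, f (e j) ω = (haem j).mk _ ω :=
      (ae_all_iff).2 (fun j => (haem j).ae_eq_mk)
    filter_upwards [hae] with ω hω
    funext j
    exact hω j
  refine (Measure.pi_eq fun s hs => ?_).symm
  rw [Measure.map_apply_of_aemeasurable hg (MeasurableSet.univ_pi hs)]
  have hpre : (fun ω j => f (e j) ω) ⁻¹' (univ.pi s) = ⋂ j, f (e j) ⁻¹' s j := by
    ext ω; simp [Set.mem_pi]
  rw [hpre]
  set S : Finset ι := Finset.univ.image e with hS
  set sets : ι → Set ℝ := fun i => if h : ∃ j, e j = i then s h.choose else univ with hsets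
  have hsets_e : ∀ j, sets (e j) = s j := by
    intro j
    have hex : ∃ j', e j' = e j := ⟨j, rfl⟩
    simp only [hsets, dif_pos hex]
    exact congrArg s (he hex.choose_spec)
  have hiInter : (⋂ j, f (e j) ⁻¹' s j) = ⋂ i ∈ S, f i ⁻¹' sets i := by
    rw [hS]
    rw [Finset.set_biInter_finset_image]
    simp only [Finset.mem_univ, Set.iInter_true, hsets_e]
  rw [hiInter, hindep.measure_inter_preimage_eq_mul S (fun i _ => by
    by_cases h : ∃ j, e j = i
    · simp only [hsets, dif_pos h]; exact hs _
    · simp only [hsets, dif_neg h]; exact MeasurableSet.univ)]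
  rw [hS, Finset.prod_image (fun a _ b _ h => he h)]
  apply Finset.prod_congr rfl
  intro j _
  rw [hsets_e, ← hlaw j, Measure.map_apply_of_aemeasurable (haem j) (hs j)]

lemma lintegral_pi_succ {m : ℕ} (μ : Measure ℝ) [SigmaFinite μ]
    (F : (Fin (m+1) → ℝ) → ENNReal) (hF : Measurable F) :
    ∫⁻ v, F v ∂(Measure.pi fun _ : Fin (m+1) => μ)
      = ∫⁻ t, ∫⁻ w, F (Fin.cons t w) ∂(Measure.pi fun _ : Fin m => μ) ∂μ := by
  have hmp := measurePreserving_piFinSuccAbove (fun _ : Fin (m+1) => μ) 0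
  set e := MeasurableEquiv.piFinSuccAbove (fun _ : Fin (m+1) => ℝ) 0 with he
  have h1 : ∫⁻ v, F v ∂(Measure.pi fun _ : Fin (m+1) => μ)
      = ∫⁻ p, F (e.symm p) ∂(μ.prod (Measure.pi fun _ : Fin m => μ)) := by
    have h2 := hmp.lintegral_comp (f := fun p => F (e.symm p)) (hF.comp e.symm.measurable)
    simp only [MeasurableEquiv.symm_apply_apply] at h2
    exact h2
  rw [h1, lintegral_prod (fun p => F (e.symm p)) ((hF.comp e.symm.measurable).aemeasurable)]
  apply lintegral_congr fun t => lintegral_congr fun w => ?_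
  congr 1
  exact Fin.insertNth_zero' t w

lemma lintegral_pi_one (μ : Measure ℝ) [SigmaFinite μ]
    (G : (Fin 1 → ℝ) → ENNReal) (hG : Measurable G) :
    ∫⁻ v, G v ∂(Measure.pi fun _ : Fin 1 => μ) = ∫⁻ u, G (fun _ => u) ∂μ := by
  have hmp := measurePreserving_funUnique (β := ℝ) μ (Fin 1)
  set e := MeasurableEquiv.funUnique (Fin 1) ℝ with he
  have h1 : ∫⁻ v, G v ∂(Measure.pi fun _ : Fin 1 => μ)
      = ∫⁻ u, G (e.symm u) ∂μ := by
    have h2 := hmp.lintegral_comp (f := fun p => G (e.symm p)) (hG.comp e.symm.measurable)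
    simp only [MeasurableEquiv.symm_apply_apply] at h2
    exact h2
  rw [h1]
  exact lintegral_congr fun u => by congr 1

lemma lintegral_pi_four (μ : Measure ℝ) [SigmaFinite μ] (F : ℝ → ℝ → ℝ → ℝ → ENNReal)
    (hF : Measurable (fun p : ℝ × ℝ × ℝ × ℝ => F p.1 p.2.1 p.2.2.1 p.2.2.2)) :
    ∫⁻ z : Fin 4 → ℝ, F (z 0) (z 1) (z 2) (z 3) ∂(Measure.pi fun _ : Fin 4 => μ)
      = ∫⁻ a, ∫⁻ b, ∫⁻ c, ∫⁻ d, F a b c d ∂μ ∂μ ∂μ ∂μ := by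
  have htup4 : Measurable (fun z : Fin 4 → ℝ => ((z 0, (z 1, (z 2, z 3))) : ℝ×ℝ×ℝ×ℝ)) :=
    (measurable_pi_apply 0).prodMk ((measurable_pi_apply 1).prodMk
      ((measurable_pi_apply 2).prodMk (measurable_pi_apply 3)))
  have h4 : Measurable (fun z : Fin 4 → ℝ => F (z 0) (z 1) (z 2) (z 3)) := by
    exact hF.comp htup4
  rw [lintegral_pi_succ μ _ h4]
  apply lintegral_congr fun a => ?_
  have htup3 : Measurable (fun z : Fin 3 → ℝ => ((a, (z 0, (z 1, z 2))) : ℝ×ℝ×ℝ×ℝ)) :=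
    measurable_const.prodMk ((measurable_pi_apply 0).prodMk
      ((measurable_pi_apply 1).prodMk (measurable_pi_apply 2)))
  have h3 : Measurable (fun z : Fin 3 → ℝ => F a (z 0) (z 1) (z 2)) := by
    exact hF.comp htup3
  rw [show (∫⁻ w, (fun v : Fin 4 → ℝ => F (v 0) (v 1) (v 2) (v 3)) (Fin.cons a w)
        ∂(Measure.pi fun _ : Fin 3 => μ))
      = ∫⁻ w : Fin 3 → ℝ, F a (w 0) (w 1) (w 2) ∂(Measure.pi fun _ : Fin 3 => μ) from rfl,
    lintegral_pi_succ μ _ h3]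
  apply lintegral_congr fun b => ?_
  have htup2 : Measurable (fun z : Fin 2 → ℝ => ((a, (b, (z 0, z 1))) : ℝ×ℝ×ℝ×ℝ)) :=
    measurable_const.prodMk (measurable_const.prodMk
      ((measurable_pi_apply 0).prodMk (measurable_pi_apply 1)))
  have h2 : Measurable (fun z : Fin 2 → ℝ => F a b (z 0) (z 1)) := by
    exact hF.comp htup2
  rw [show (∫⁻ w, (fun v : Fin 3 → ℝ => F a (v 0) (v 1) (v 2)) (Fin.cons b w)
        ∂(Measure.pi fun _ : Fin 2 => μ))
      = ∫⁻ w : Fin 2 → ℝ, F a b (w 0) (w 1) ∂(Measure.pi fun _ : Fin 2 => μ) from rfl,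
    lintegral_pi_succ μ _ h2]
  apply lintegral_congr fun c => ?_
  have htup1 : Measurable (fun z : Fin 1 → ℝ => ((a, (b, (c, z 0))) : ℝ×ℝ×ℝ×ℝ)) :=
    measurable_const.prodMk (measurable_const.prodMk
      (measurable_const.prodMk (measurable_pi_apply 0)))
  have h1 : Measurable (fun z : Fin 1 → ℝ => F a b c (z 0)) := by
    exact hF.comp htup1
  rw [show (∫⁻ w, (fun v : Fin 2 → ℝ => F a b (v 0) (v 1)) (Fin.cons c w)
        ∂(Measure.pi fun _ : Fin 1 => μ))
      = ∫⁻ w : Fin 1 → ℝ, F a b c (w 0) ∂(Measure.pi fun _ : Fin 1 => μ) from rfl,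
    lintegral_pi_one μ _ h1]

lemma measurable_sumexp (c : ℝ) (k : ℕ) :
    Measurable fun w : Fin k → ℝ => ENNReal.ofReal (exp (-(c * ∑ i, w i))) :=
  Measurable.ennreal_ofReal
    ((((Finset.measurable_sum Finset.univ fun i _ => measurable_pi_apply i).const_mul c).neg).exp)

lemma lint_sumexp {l c : ℝ} (hl : 0 < l) (hc : 0 ≤ c) (m : ℕ) :
    ∫⁻ w, ENNReal.ofReal (exp (-(c * ∑ i, w i))) ∂(Measure.pi fun _ : Fin m => expMeasure l)
      = ENNReal.ofReal (l/(l+c)) ^ m := by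
  haveI := isProbabilityMeasure_expMeasure hl
  induction m with
  | zero =>
    rw [Measure.pi_of_empty, lintegral_dirac' _ (measurable_sumexp c 0)]
    simp
  | succ m ih =>
    rw [lintegral_pi_succ (expMeasure l) _ (measurable_sumexp c (m+1))]
    have key : ∀ t : ℝ, ∫⁻ w, (fun v : Fin (m+1) → ℝ => ENNReal.ofReal (exp (-(c * ∑ i, v i))))
          (Fin.cons t w) ∂(Measure.pi fun _ : Fin m => expMeasure l)
        = ENNReal.ofReal (exp (-(c*t))) * ENNReal.ofReal (l/(l+c)) ^ m := by
      intro t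
      rw [← ih, ← lintegral_const_mul' _ _ ENNReal.ofReal_ne_top]
      apply lintegral_congr fun w => ?_
      show ENNReal.ofReal (exp (-(c * ∑ i, Fin.cons t w i))) = _
      rw [show (∑ i, Fin.cons t w i) = t + ∑ i, w i from Fin.sum_cons t w,
        ← ENNReal.ofReal_mul (exp_nonneg _), ← exp_add]
      congr 2
      ring
    simp_rw [key]
    rw [lintegral_mul_const' _ _ (by simp), lint_laplace hl hc, pow_succ, mul_comm]

lemma ite_ne_top {p : Prop} [Decidable p] : (if p then (1:ENNReal) else 0) ≠ ⊤ := by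
  split_ifs <;> simp

lemma inner_four {mu x y t : ℝ} (hmu : 0 < mu) (hx : 0 ≤ x) (hy : 0 ≤ y) (ht : 0 ≤ t) :
    (Measure.pi fun _ : Fin 4 => expMeasure mu)
      {z : Fin 4 → ℝ | x < min (z 0) (t + z 1) - max 0 t
        ∧ y < min (z 0 + z 2) (t + (z 1 + z 3)) - max (z 0) (t + z 1)}
    = ENNReal.ofReal (exp (-(mu*t)) * (exp (-(2*mu*(x+y))) / 2)) := by
  haveI := isProbabilityMeasure_expMeasure hmu
  set F : ℝ → ℝ → ℝ → ℝ → ENNReal := fun a b c d =>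
    (if t + x < a then (1:ENNReal) else 0) * ((if x < b then (1:ENNReal) else 0)
      * ((if max a (t+b) - a + y < c then (1:ENNReal) else 0)
        * (if max a (t+b) - (t+b) + y < d then (1:ENNReal) else 0))) with hF_def
  have hmemiff : ∀ a b c d : ℝ,
      ((x < min a (t + b) - max 0 t ∧ y < min (a + c) (t + (b + d)) - max a (t + b))
        ↔ ((t + x < a ∧ x < b) ∧ (max a (t+b) - a + y < c ∧ max a (t+b) - (t+b) + y < d))) := by
    intro a b c d
    have c1 : (x < min a (t + b) - max 0 t) ↔ (t + x < a ∧ x < b) := by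
      rw [max_eq_right ht, lt_sub_iff_add_lt, lt_min_iff]
      constructor
      · rintro ⟨h1, h2⟩; exact ⟨by linarith, by linarith⟩
      · rintro ⟨h1, h2⟩; exact ⟨by linarith, by linarith⟩
    have c2 : (y < min (a + c) (t + (b + d)) - max a (t + b))
        ↔ (max a (t+b) - a + y < c ∧ max a (t+b) - (t+b) + y < d) := by
      rw [lt_sub_iff_add_lt, lt_min_iff]
      constructor
      · rintro ⟨h1, h2⟩; exact ⟨by linarith, by linarith⟩
      · rintro ⟨h1, h2⟩; exact ⟨by linarith, by linarith⟩
    rw [c1, c2]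
  -- measurability of the set
  have hBmeas : MeasurableSet {z : Fin 4 → ℝ | x < min (z 0) (t + z 1) - max 0 t
      ∧ y < min (z 0 + z 2) (t + (z 1 + z 3)) - max (z 0) (t + z 1)} := by
    apply MeasurableSet.inter
    · exact measurableSet_lt measurable_const
        ((((measurable_pi_apply 0).min (measurable_const.add (measurable_pi_apply 1))).sub measurable_const))
    · exact measurableSet_lt measurable_const
        ((((measurable_pi_apply 0).add (measurable_pi_apply 2)).min
          (measurable_const.add ((measurable_pi_apply 1).add (measurable_pi_apply 3)))).sub
          ((measurable_pi_apply 0).max (measurable_const.add (measurable_pi_apply 1))))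
  rw [← lintegral_indicator_one hBmeas]
  have hind : ∀ z : Fin 4 → ℝ,
      ({z : Fin 4 → ℝ | x < min (z 0) (t + z 1) - max 0 t
        ∧ y < min (z 0 + z 2) (t + (z 1 + z 3)) - max (z 0) (t + z 1)}).indicator 1 z
      = F (z 0) (z 1) (z 2) (z 3) := by
    intro z
    rw [Set.indicator_apply]
    by_cases h : z ∈ {z : Fin 4 → ℝ | x < min (z 0) (t + z 1) - max 0 t
        ∧ y < min (z 0 + z 2) (t + (z 1 + z 3)) - max (z 0) (t + z 1)}
    · simp only [if_pos h, Pi.one_apply]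
      have h' := (hmemiff (z 0) (z 1) (z 2) (z 3)).1 h
      rw [hF_def]
      simp only [if_pos h'.1.1, if_pos h'.1.2, if_pos h'.2.1, if_pos h'.2.2, mul_one]
    · simp only [if_neg h]
      have h' : ¬((t + x < z 0 ∧ x < z 1) ∧ (max (z 0) (t+ z 1) - z 0 + y < z 2
          ∧ max (z 0) (t + z 1) - (t + z 1) + y < z 3)) := fun hc => h ((hmemiff _ _ _ _).2 hc)
      rw [hF_def]
      by_cases h1 : t + x < z 0 <;> by_cases h2 : x < z 1 <;>
        by_cases h3 : max (z 0) (t + z 1) - z 0 + y < z 2 <;>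
        by_cases h4 : max (z 0) (t + z 1) - (t + z 1) + y < z 3 <;>
        simp [h1, h2, h3, h4] at h' ⊢
  rw [lintegral_congr hind]
  have hFmeas : Measurable (fun p : ℝ × ℝ × ℝ × ℝ => F p.1 p.2.1 p.2.2.1 p.2.2.2) := by
    have hmax : Measurable (fun p : ℝ × ℝ × ℝ × ℝ => max p.1 (t + p.2.1)) :=
      measurable_fst.max (measurable_snd.fst.const_add t)
    refine Measurable.mul ?_ (Measurable.mul ?_ (Measurable.mul ?_ ?_))
    · exact Measurable.ite (measurableSet_lt measurable_const measurable_fst)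
        measurable_const measurable_const
    · exact Measurable.ite (measurableSet_lt measurable_const measurable_snd.fst)
        measurable_const measurable_const
    · exact Measurable.ite (measurableSet_lt
        (((hmax.sub measurable_fst).add_const y)) measurable_snd.snd.fst)
        measurable_const measurable_const
    · exact Measurable.ite (measurableSet_lt
        (((hmax.sub (measurable_snd.fst.const_add t)).add_const y)) measurable_snd.snd.snd)
        measurable_const measurable_const
  rw [lintegral_pi_four _ _ hFmeas]
  have hφd : ∀ a b : ℝ, 0 ≤ max a (t+b) - (t+b) + y := fun a b =>
    add_nonneg (sub_nonneg.2 (le_max_right _ _)) hy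
  have hφc : ∀ a b : ℝ, 0 ≤ max a (t+b) - a + y := fun a b =>
    add_nonneg (sub_nonneg.2 (le_max_left _ _)) hy
  have h_in : ∀ a, (∫⁻ b, ∫⁻ c, ∫⁻ d, F a b c d ∂expMeasure mu ∂expMeasure mu ∂expMeasure mu)
      = (if t + x < a then (1:ENNReal) else 0) * ∫⁻ b, (if x < b then (1:ENNReal) else 0)
          * ENNReal.ofReal (exp (-(mu*(2*max a (t+b) - a - t - b + 2*y)))) ∂expMeasure mu := by
    intro a
    rw [← lintegral_const_mul' _ _ ite_ne_top]
    apply lintegral_congr fun b => ?_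
    have hd : ∀ c, ∫⁻ d, F a b c d ∂expMeasure mu
        = (if t + x < a then (1:ENNReal) else 0) * ((if x < b then (1:ENNReal) else 0)
          * ((if max a (t+b) - a + y < c then (1:ENNReal) else 0)
            * ENNReal.ofReal (exp (-(mu * (max a (t+b) - (t+b) + y)))))) := by
      intro c
      rw [hF_def]
      rw [lintegral_const_mul' _ _ ite_ne_top, lintegral_const_mul' _ _ ite_ne_top,
        lintegral_const_mul' _ _ ite_ne_top, lint_tail hmu (hφd a b)]
    rw [lintegral_congr hd, lintegral_const_mul' _ _ ite_ne_top,
      lintegral_const_mul' _ _ ite_ne_top,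
      lintegral_mul_const' _ _ ENNReal.ofReal_ne_top, lint_tail hmu (hφc a b)]
    congr 1
    rw [mul_comm (ENNReal.ofReal _) (ENNReal.ofReal _), ← ENNReal.ofReal_mul (exp_nonneg _),
      ← exp_add]
    congr 2
    ring
  rw [lintegral_congr h_in]
  have h_a : ∀ a, (if t + x < a then (1:ENNReal) else 0) * ∫⁻ b, (if x < b then (1:ENNReal) else 0)
        * ENNReal.ofReal (exp (-(mu*(2*max a (t+b) - a - t - b + 2*y)))) ∂expMeasure mu
      = (if t + x < a then (1:ENNReal) else 0)
        * ENNReal.ofReal (exp (-(mu*(a-t))) * exp (-(2*mu*y)) * (mu*(a-t-x) + 1/2)) := by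
    intro a
    by_cases ha : t + x < a
    · rw [if_pos ha, one_mul, one_mul, lint_stageB hmu hx ha]
    · rw [if_neg ha, zero_mul, zero_mul]
  rw [lintegral_congr h_a, lint_stageA hmu hx ht]

end TandemAux

open TandemAux

lemma vec_inj {n k : ℕ} (hk : 1 ≤ k) : Function.Injective
    (![Sum.inl n, Sum.inl (n+k), Sum.inr n, Sum.inr (n+k)] : Fin 4 → ℕ ⊕ ℕ) := by
  intro j j' h
  fin_cases j <;> fin_cases j' <;> simp_all

theorem tandem_joint_tail [MeasurableSpace Ω] (P : Measure Ω) [IsProbabilityMeasure P]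
    (lam mu : ℝ) (hlam : 0 < lam) (hmu : 0 < mu)
    (τ S1 S2 : ℕ → Ω → ℝ)
    (hindep : iIndepFun
      (Sum.elim τ (Sum.elim S1 S2) : ℕ ⊕ (ℕ ⊕ ℕ) → Ω → ℝ) P)
    (hτ : ∀ i, P.map (τ i) = expMeasure lam)
    (hS1 : ∀ i, P.map (S1 i) = expMeasure mu)
    (hS2 : ∀ i, P.map (S2 i) = expMeasure mu)
    (n k : ℕ) (hk : 1 ≤ k) (x y : ℝ) (hx : 0 ≤ x) (hy : 0 ≤ y) :
    P {ω | x < ovl1 τ S1 n (n + k) ω ∧ y < ovl2 τ S1 S2 n (n + k) ω} =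
      ENNReal.ofReal (Real.exp (-(2 * mu * (x + y))) / 2 * (lam / (lam + mu)) ^ k) := by
  classical
  haveI := isProbabilityMeasure_expMeasure hlam
  haveI := isProbabilityMeasure_expMeasure hmu
  set f : ℕ ⊕ (ℕ ⊕ ℕ) → Ω → ℝ := Sum.elim τ (Sum.elim S1 S2) with hf_def
  set vec : Fin 4 → ℕ ⊕ ℕ := ![Sum.inl n, Sum.inl (n+k), Sum.inr n, Sum.inr (n+k)] with hvec_def
  set e : (Fin k ⊕ Fin 4) → ℕ ⊕ (ℕ ⊕ ℕ) :=
    Sum.elim (fun i => Sum.inl (n + (i : ℕ))) (fun j => Sum.inr (vec j)) with he_def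
  have he : Function.Injective e := by
    intro p q h
    rcases p with i | j <;> rcases q with i' | j'
    · simp only [he_def, Sum.elim_inl, Sum.inl.injEq] at h
      exact congrArg Sum.inl (Fin.ext (by omega))
    · simp [he_def] at h
    · simp [he_def] at h
    · simp only [he_def, Sum.elim_inr, Sum.inr.injEq, hvec_def] at h
      exact congrArg Sum.inr (vec_inj hk h)
  set ν : (Fin k ⊕ Fin 4) → Measure ℝ :=
    Sum.elim (fun _ => expMeasure lam) (fun _ => expMeasure mu) with hν_def
  haveI : ∀ j, IsProbabilityMeasure (ν j) := by
    intro j; rcases j with i | j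
    · exact isProbabilityMeasure_expMeasure hlam
    · exact isProbabilityMeasure_expMeasure hmu
  have hlaw : ∀ j, P.map (f (e j)) = ν j := by
    intro j; rcases j with i | j
    · exact hτ (n + (i : ℕ))
    · fin_cases j
      · exact hS1 n
      · exact hS1 (n+k)
      · exact hS2 n
      · exact hS2 (n+k)
  have hmap := map_tuple_eq_pi P f hindep e he ν hlaw
  -- a.e. measurable tuple
  have haem : ∀ j, AEMeasurable (f (e j)) P := by
    intro j
    by_contra hcon
    have h0 := hlaw j
    rw [Measure.map_of_not_aemeasurable hcon] at h0
    have h1 := congrArg (fun m : Measure ℝ => m univ) h0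
    simp [measure_univ] at h1
  have hg : AEMeasurable (fun ω j => f (e j) ω) P := by
    refine ⟨fun ω j => (haem j).mk _ ω, measurable_pi_lambda _ (fun j => (haem j).measurable_mk), ?_⟩
    have hae : ∀ᵐ ω ∂P, ∀ j, f (e j) ω = (haem j).mk _ ω :=
      (MeasureTheory.ae_all_iff).2 (fun j => (haem j).ae_eq_mk)
    filter_upwards [hae] with ω hω
    funext j
    exact hω j
  -- the target set on the product space
  set B : Set ((Fin k → ℝ) × (Fin 4 → ℝ)) :=
    {p | x < min (p.2 0) ((∑ i, p.1 i) + p.2 1) - max 0 (∑ i, p.1 i)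
      ∧ y < min (p.2 0 + p.2 2) ((∑ i, p.1 i) + (p.2 1 + p.2 3))
          - max (p.2 0) ((∑ i, p.1 i) + p.2 1)} with hB_def
  have hsum_meas : Measurable (fun p : (Fin k → ℝ) × (Fin 4 → ℝ) => ∑ i, p.1 i) :=
    Finset.measurable_sum Finset.univ fun i _ => (measurable_pi_apply i).comp measurable_fst
  have hev : ∀ j : Fin 4, Measurable (fun p : (Fin k → ℝ) × (Fin 4 → ℝ) => p.2 j) :=
    fun j => (measurable_pi_apply j).comp measurable_snd
  have hBmeas : MeasurableSet B := by
    apply MeasurableSet.inter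
    · exact measurableSet_lt measurable_const
        ((((hev 0).min (hsum_meas.add (hev 1))).sub (measurable_const.max hsum_meas)))
    · exact measurableSet_lt measurable_const
        ((((hev 0).add (hev 2)).min (hsum_meas.add ((hev 1).add (hev 3)))).sub
          ((hev 0).max (hsum_meas.add (hev 1))))
  set eqv := MeasurableEquiv.sumPiEquivProdPi (fun _ : Fin k ⊕ Fin 4 => ℝ) with heqv_def
  -- event equality
  have hevent : {ω | x < ovl1 τ S1 n (n + k) ω ∧ y < ovl2 τ S1 S2 n (n + k) ω}
      = (fun ω j => f (e j) ω) ⁻¹' (eqv ⁻¹' B) := by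
    ext ω
    set A := arrivalTime τ n ω with hA_def
    set T := ∑ i : Fin k, τ (n + (i : ℕ)) ω with hT_def
    set a := S1 n ω
    set b := S1 (n+k) ω
    set c := S2 n ω
    set d := S2 (n+k) ω
    have hA : arrivalTime τ (n+k) ω = A + T := by
      show ∑ i ∈ Finset.range (n+k), τ i ω = A + T
      rw [Finset.sum_range_add]
      have e1 : (∑ i ∈ Finset.range n, τ i ω) = A := by rw [hA_def]; rfl
      have e2 : (∑ i ∈ Finset.range k, τ (n+i) ω) = T := by
        rw [hT_def]; exact Finset.sum_range fun i => τ (n+i) ω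
      rw [e1, e2]
    have h1 : dep1 τ S1 n ω = A + a := rfl
    have h2 : dep1 τ S1 (n+k) ω = A + (T + b) := by
      show arrivalTime τ (n+k) ω + S1 (n+k) ω = A + (T + b)
      rw [hA]; ring
    have h5 : dep2 τ S1 S2 n ω = A + (a + c) := by
      show dep1 τ S1 n ω + S2 n ω = A + (a + c)
      rw [h1]; ring
    have h6 : dep2 τ S1 S2 (n+k) ω = A + (T + (b + d)) := by
      show dep1 τ S1 (n+k) ω + S2 (n+k) ω = A + (T + (b + d))
      rw [h2]; ring
    have harrn : arrivalTime τ n ω = A := hA_def.symm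
    have hov1 : ovl1 τ S1 n (n+k) ω = max 0 (min a (T + b) - max 0 T) := by
      show max 0 (min (dep1 τ S1 n ω) (dep1 τ S1 (n+k) ω)
        - max (arrivalTime τ n ω) (arrivalTime τ (n+k) ω)) = _
      rw [h1, h2, hA, harrn]
      rw [min_add_add_left]
      rw [show max A (A + T) = A + max 0 T by rw [← max_add_add_left, add_zero]]
      rw [add_sub_add_left_eq_sub]
    have hov2 : ovl2 τ S1 S2 n (n+k) ω
        = max 0 (min (a + c) (T + (b + d)) - max a (T + b)) := by
      show max 0 (min (dep2 τ S1 S2 n ω) (dep2 τ S1 S2 (n+k) ω)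
        - max (dep1 τ S1 n ω) (dep1 τ S1 (n+k) ω)) = _
      rw [h1, h2, h5, h6]
      rw [min_add_add_left, max_add_add_left, add_sub_add_left_eq_sub]
    simp only [Set.mem_setOf_eq, Set.mem_preimage]
    rw [hov1, hov2, lt_max_iff, lt_max_iff,
      or_iff_right (not_lt.2 hx), or_iff_right (not_lt.2 hy)]
    exact Iff.rfl
  -- compute
  rw [hevent, ← Measure.map_apply_of_aemeasurable hg (eqv.measurable hBmeas), hmap]
  have hpre := (measurePreserving_sumPiEquivProdPi ν).measure_preimage
    (hBmeas.nullMeasurableSet (μ := ((Measure.pi fun i : Fin k => ν (Sum.inl i)).prod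
      (Measure.pi fun j : Fin 4 => ν (Sum.inr j)))))
  rw [show (Measure.pi ν) (eqv ⁻¹' B)
      = ((Measure.pi fun _ : Fin k => expMeasure lam).prod
          (Measure.pi fun _ : Fin 4 => expMeasure mu)) B from hpre]
  rw [Measure.prod_apply hBmeas]
  have hae : ∀ᵐ w ∂(Measure.pi fun _ : Fin k => expMeasure lam), ∀ i, 0 ≤ w i := by
    rw [MeasureTheory.ae_all_iff]
    intro i
    have h0 : (expMeasure lam) (Iio 0) = 0 := by
      rw [expMeasure, gammaMeasure, withDensity_apply _ measurableSet_Iio]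
      exact lintegral_gammaPDF_of_nonpos le_rfl
    have := Measure.pi_eval_preimage_null (μ := fun _ : Fin k => expMeasure lam) (i := i) h0
    rw [ae_iff]
    convert this using 2
    ext w
    simp [not_le, Function.eval]
  rw [lintegral_congr_ae (hae.mono fun w hw => ?_)]
  rotate_left
  · exact fun w => ENNReal.ofReal (Real.exp (-(mu * ∑ i, w i)))
      * ENNReal.ofReal (Real.exp (-(2*mu*(x+y))) / 2)
  · have hT : 0 ≤ ∑ i, w i := Finset.sum_nonneg fun i _ => hw i
    have hpreB : Prod.mk w ⁻¹' B = {z : Fin 4 → ℝ | x < min (z 0) ((∑ i, w i) + z 1) - max 0 (∑ i, w i)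
        ∧ y < min (z 0 + z 2) ((∑ i, w i) + (z 1 + z 3)) - max (z 0) ((∑ i, w i) + z 1)} := rfl
    rw [hpreB, inner_four hmu hx hy hT, ENNReal.ofReal_mul (exp_nonneg _)]
  rw [lintegral_mul_const' _ _ ENNReal.ofReal_ne_top, lint_sumexp hlam hmu.le k,
    ← ENNReal.ofReal_pow (by positivity), ← ENNReal.ofReal_mul (by positivity), mul_comm]
end

section
/- Let $\lambda, \mu > 0$ and let $k$ be a positive integer. The five-dimensional integral $\int_{\mathbb{R}_+^5} \mathbf{1}\{z_1 < z_5\}\,\mathbf{1}\{z_4 > y\}\,\mathbf{1}\{z_1 + z_2 - z_5 - z_3 > y\}\, \frac{\lambda^k z_5^{k-1}}{\Gamma(k)} e^{-\lambda z_5} \mu^4 e^{-\mu(z_1+z_2+z_3+z_4)}\, dz_1\,dz_2\,dz_3\,dz_4\,dz_5$ equals $\frac{\mu k\, e^{-2\mu y}}{2} \cdot \frac{\lambda^k}{(\lambda+\mu)^{k+1}}$ for all $y \geq 0$. -/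
open MeasureTheory Real

lemma exp_int_aux {c : ℝ} (hc : 0 < c) (a : ℝ) :
    ∫ x in Set.Ioi a, Real.exp (-(c * x)) = Real.exp (-(c * a)) / c := by
  have h := integral_comp_mul_left_Ioi (fun x => Real.exp (-x)) a hc
  simp only [smul_eq_mul] at h
  rw [h, integral_exp_neg_Ioi]
  ring

lemma exp_integrable {c : ℝ} (hc : 0 < c) (a : ℝ) :
    IntegrableOn (fun x : ℝ => Real.exp (-(c * x))) (Set.Ioi a) := by
  simpa [neg_mul] using exp_neg_integrableOn_Ioi a hc

lemma key_step (lam mu : ℝ) (hmu : 0 < mu) (k : ℕ) (y : ℝ) (hy : 0 ≤ y)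
    (z5 : ℝ) (hz5 : 0 < z5) (z4 : ℝ) (z3 : ℝ) (hz3 : 0 < z3) :
    (∫ z2 in Set.Ioi (0:ℝ), ∫ z1 in Set.Ioi (0:ℝ),
        (if z1 < z5 ∧ z4 > y ∧ z1 + z2 - z5 - z3 > y then
          lam ^ k * z5 ^ (k - 1) / Real.Gamma k * Real.exp (-(lam * z5)) *
            mu ^ 4 * Real.exp (-(mu * (z1 + z2 + z3 + z4)))
        else 0)) =
      (if y < z4 then
        lam ^ k * z5 ^ (k - 1) / Real.Gamma k * Real.exp (-(lam * z5)) * mu ^ 4 *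
          z5 * Real.exp (-(mu * (y + 2 * z3 + z4 + z5))) / mu
      else 0) := by
  set B : ℝ := lam ^ k * z5 ^ (k - 1) / Real.Gamma k * Real.exp (-(lam * z5)) * mu ^ 4 with hB
  -- integrability for Fubini swap
  have hexp : Integrable (fun x : ℝ => Real.exp (-(mu * x))) (volume.restrict (Set.Ioi 0)) :=
    exp_integrable hmu 0
  have hg : Integrable (fun p : ℝ × ℝ =>
      (|B| * Real.exp (-(mu * (z3 + z4)))) * (Real.exp (-(mu * p.1)) * Real.exp (-(mu * p.2))))
      ((volume.restrict (Set.Ioi 0)).prod (volume.restrict (Set.Ioi 0))) :=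
    (hexp.mul_prod hexp).const_mul _
  have hmeas : Measurable (fun p : ℝ × ℝ =>
      if p.2 < z5 ∧ z4 > y ∧ p.2 + p.1 - z5 - z3 > y then
        B * Real.exp (-(mu * (p.2 + p.1 + z3 + z4))) else 0) := by
    have hs : MeasurableSet {p : ℝ × ℝ | p.2 < z5 ∧ z4 > y ∧ p.2 + p.1 - z5 - z3 > y} := by
      simp only [Set.setOf_and]
      refine MeasurableSet.inter ?_ (MeasurableSet.inter ?_ ?_)
      · exact measurableSet_lt measurable_snd measurable_const
      · exact MeasurableSet.const _
      · exact measurableSet_lt measurable_const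
          (((measurable_snd.add measurable_fst).sub measurable_const).sub measurable_const)
    have heq : (fun p : ℝ × ℝ =>
        if p.2 < z5 ∧ z4 > y ∧ p.2 + p.1 - z5 - z3 > y then
          B * Real.exp (-(mu * (p.2 + p.1 + z3 + z4))) else 0)
        = Set.indicator {p : ℝ × ℝ | p.2 < z5 ∧ z4 > y ∧ p.2 + p.1 - z5 - z3 > y}
          (fun p => B * Real.exp (-(mu * (p.2 + p.1 + z3 + z4)))) := by
      funext p
      rw [Set.indicator_apply]
      exact if_congr Iff.rfl rfl rfl
    rw [heq]
    apply Measurable.indicator ?_ hs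
    fun_prop
  have hint : Integrable (Function.uncurry fun z2 z1 : ℝ =>
      if z1 < z5 ∧ z4 > y ∧ z1 + z2 - z5 - z3 > y then
        B * Real.exp (-(mu * (z1 + z2 + z3 + z4))) else 0)
      ((volume.restrict (Set.Ioi 0)).prod (volume.restrict (Set.Ioi 0))) := by
    refine hg.mono' hmeas.aestronglyMeasurable (Filter.Eventually.of_forall fun p => ?_)
    show ‖if p.2 < z5 ∧ z4 > y ∧ p.2 + p.1 - z5 - z3 > y then
        B * Real.exp (-(mu * (p.2 + p.1 + z3 + z4))) else 0‖ ≤ _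
    split_ifs with hc
    · have he : Real.exp (-(mu * (z3 + z4))) * (Real.exp (-(mu * p.1)) * Real.exp (-(mu * p.2)))
          = Real.exp (-(mu * (p.2 + p.1 + z3 + z4))) := by
        rw [← Real.exp_add, ← Real.exp_add]; congr 1; ring
      rw [Real.norm_eq_abs, abs_mul, Real.abs_exp]
      rw [mul_assoc, he]
    · simp only [norm_zero]
      positivity
  rw [MeasureTheory.integral_integral_swap hint]
  -- now compute inner z2-integral
  have inner2 : Set.EqOn
      (fun z1 => ∫ z2 in Set.Ioi (0:ℝ),
        (if z1 < z5 ∧ z4 > y ∧ z1 + z2 - z5 - z3 > y then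
          B * Real.exp (-(mu * (z1 + z2 + z3 + z4))) else 0))
      (fun z1 => if z1 < z5 ∧ y < z4 then
          B * Real.exp (-(mu * (y + 2 * z3 + z4 + z5))) / mu else 0)
      (Set.Ioi 0) := by
    intro z1 hz1
    simp only
    by_cases h : z1 < z5 ∧ y < z4
    · rw [if_pos h]
      have hL : (0:ℝ) < y + z5 + z3 - z1 := by
        have := h.1; linarith
      calc (∫ z2 in Set.Ioi (0:ℝ),
            (if z1 < z5 ∧ z4 > y ∧ z1 + z2 - z5 - z3 > y then
              B * Real.exp (-(mu * (z1 + z2 + z3 + z4))) else 0))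
          = ∫ z2 in Set.Ioi (0:ℝ), (Set.Ioi (y + z5 + z3 - z1)).indicator
              (fun z2 => B * Real.exp (-(mu * (z1 + z2 + z3 + z4)))) z2 := by
            refine setIntegral_congr_fun measurableSet_Ioi fun z2 _ => ?_
            rw [Set.indicator_apply]
            refine if_congr ?_ rfl rfl
            simp only [Set.mem_Ioi]
            constructor
            · rintro ⟨-, -, h3⟩; linarith
            · intro hz2; exact ⟨h.1, h.2, by linarith⟩
        _ = ∫ z2 in Set.Ioi 0 ∩ Set.Ioi (y + z5 + z3 - z1),
              B * Real.exp (-(mu * (z1 + z2 + z3 + z4))) := setIntegral_indicator measurableSet_Ioi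
        _ = ∫ z2 in Set.Ioi (y + z5 + z3 - z1),
              B * Real.exp (-(mu * (z1 + z2 + z3 + z4))) := by
            rw [Set.inter_eq_right.mpr (Set.Ioi_subset_Ioi hL.le)]
        _ = ∫ z2 in Set.Ioi (y + z5 + z3 - z1),
              (B * Real.exp (-(mu * (z1 + z3 + z4)))) * Real.exp (-(mu * z2)) := by
            refine setIntegral_congr_fun measurableSet_Ioi fun z2 _ => ?_
            have he : Real.exp (-(mu * (z1 + z3 + z4))) * Real.exp (-(mu * z2))
                = Real.exp (-(mu * (z1 + z2 + z3 + z4))) := by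
              rw [← Real.exp_add]; congr 1; ring
            linear_combination -B * he
        _ = (B * Real.exp (-(mu * (z1 + z3 + z4)))) *
              (Real.exp (-(mu * (y + z5 + z3 - z1))) / mu) := by
            rw [MeasureTheory.integral_const_mul, exp_int_aux hmu]
        _ = B * Real.exp (-(mu * (y + 2 * z3 + z4 + z5))) / mu := by
            have he : Real.exp (-(mu * (z1 + z3 + z4))) * Real.exp (-(mu * (y + z5 + z3 - z1)))
                = Real.exp (-(mu * (y + 2 * z3 + z4 + z5))) := by
              rw [← Real.exp_add]; congr 1; ring
            linear_combination (B / mu) * he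
    · rw [if_neg h]
      have hz : Set.EqOn (fun z2 =>
          (if z1 < z5 ∧ z4 > y ∧ z1 + z2 - z5 - z3 > y then
            B * Real.exp (-(mu * (z1 + z2 + z3 + z4))) else 0)) (fun _ => (0:ℝ)) (Set.Ioi 0) := by
        intro z2 _
        simp only
        split_ifs with hc
        · exact absurd ⟨hc.1, hc.2.1⟩ h
        · rfl
      rw [setIntegral_congr_fun measurableSet_Ioi hz, integral_zero]
  rw [setIntegral_congr_fun measurableSet_Ioi inner2]
  by_cases h4 : y < z4
  · simp only [h4, and_true, if_true]
    calc (∫ z1 in Set.Ioi (0:ℝ), if z1 < z5 then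
            B * Real.exp (-(mu * (y + 2 * z3 + z4 + z5))) / mu else 0)
        = ∫ z1 in Set.Ioi (0:ℝ), (Set.Iio z5).indicator
            (fun _ => B * Real.exp (-(mu * (y + 2 * z3 + z4 + z5))) / mu) z1 := by
          refine setIntegral_congr_fun measurableSet_Ioi fun z1 _ => ?_
          rw [Set.indicator_apply]
          exact if_congr (Set.mem_Iio).symm rfl rfl
      _ = ∫ z1 in Set.Ioi 0 ∩ Set.Iio z5,
            B * Real.exp (-(mu * (y + 2 * z3 + z4 + z5))) / mu := setIntegral_indicator measurableSet_Iio
      _ = (volume (Set.Ioo (0:ℝ) z5)).toReal •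
            (B * Real.exp (-(mu * (y + 2 * z3 + z4 + z5))) / mu) := by
          rw [Set.Ioi_inter_Iio, setIntegral_const]
          rfl
      _ = B * z5 * Real.exp (-(mu * (y + 2 * z3 + z4 + z5))) / mu := by
          rw [Real.volume_Ioo, ENNReal.toReal_ofReal (by linarith), smul_eq_mul]
          ring
  · simp only [h4, and_false, if_false, integral_zero]

lemma pow_exp_int {c : ℝ} (hc : 0 < c) (n : ℕ) :
    ∫ x in Set.Ioi (0:ℝ), x ^ n * Real.exp (-(c * x)) = (Nat.factorial n : ℝ) / c ^ (n + 1) := by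
  have h := integral_rpow_mul_exp_neg_mul_Ioi (a := (n : ℝ) + 1) (r := c) (by positivity) hc
  rw [show ((n:ℝ) + 1 - 1) = (n:ℝ) by ring] at h
  calc ∫ x in Set.Ioi (0:ℝ), x ^ n * Real.exp (-(c * x))
      = ∫ x in Set.Ioi (0:ℝ), x ^ ((n:ℝ)) * Real.exp (-(c * x)) :=
        setIntegral_congr_fun measurableSet_Ioi (fun x hx => by rw [Real.rpow_natCast])
    _ = (1/c) ^ ((n:ℝ) + 1) * Real.Gamma ((n:ℝ) + 1) := h
    _ = (Nat.factorial n : ℝ) / c ^ (n + 1) := by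
        rw [show ((n:ℝ) + 1) = ((n + 1 : ℕ) : ℝ) by push_cast; ring, Real.rpow_natCast,
          Nat.cast_add, Nat.cast_one, Real.Gamma_nat_eq_factorial, div_pow, one_pow]
        ring

theorem tandem_zero_first_overlap (lam mu : ℝ) (hlam : 0 < lam) (hmu : 0 < mu)
    (k : ℕ) (hk : 1 ≤ k) (y : ℝ) (hy : 0 ≤ y) :
    (∫ z5 in Set.Ioi (0:ℝ), ∫ z4 in Set.Ioi (0:ℝ), ∫ z3 in Set.Ioi (0:ℝ),
      ∫ z2 in Set.Ioi (0:ℝ), ∫ z1 in Set.Ioi (0:ℝ),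
        (if z1 < z5 ∧ z4 > y ∧ z1 + z2 - z5 - z3 > y then
          lam ^ k * z5 ^ (k - 1) / Real.Gamma k * Real.exp (-(lam * z5)) *
            mu ^ 4 * Real.exp (-(mu * (z1 + z2 + z3 + z4)))
        else 0)) =
      mu * k * Real.exp (-(2 * mu * y)) / 2 * (lam ^ k / (lam + mu) ^ (k + 1)) := by
  have hk0 : k ≠ 0 := by omega
  have h2mu : (0:ℝ) < 2 * mu := by linarith
  have hΓpos : 0 < Real.Gamma (k : ℝ) := Real.Gamma_pos_of_pos (by exact_mod_cast Nat.pos_of_ne_zero hk0)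
  calc (∫ z5 in Set.Ioi (0:ℝ), ∫ z4 in Set.Ioi (0:ℝ), ∫ z3 in Set.Ioi (0:ℝ),
      ∫ z2 in Set.Ioi (0:ℝ), ∫ z1 in Set.Ioi (0:ℝ),
        (if z1 < z5 ∧ z4 > y ∧ z1 + z2 - z5 - z3 > y then
          lam ^ k * z5 ^ (k - 1) / Real.Gamma k * Real.exp (-(lam * z5)) *
            mu ^ 4 * Real.exp (-(mu * (z1 + z2 + z3 + z4)))
        else 0))
      = ∫ z5 in Set.Ioi (0:ℝ), ∫ z4 in Set.Ioi (0:ℝ), ∫ z3 in Set.Ioi (0:ℝ),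
          (if y < z4 then
            lam ^ k * z5 ^ (k - 1) / Real.Gamma k * Real.exp (-(lam * z5)) * mu ^ 4 *
              z5 * Real.exp (-(mu * (y + 2 * z3 + z4 + z5))) / mu
          else 0) := by
        refine setIntegral_congr_fun measurableSet_Ioi fun z5 hz5 => ?_
        refine setIntegral_congr_fun measurableSet_Ioi fun z4 hz4 => ?_
        refine setIntegral_congr_fun measurableSet_Ioi fun z3 hz3 => ?_
        exact key_step lam mu hmu k y hy z5 hz5 z4 z3 hz3
    _ = ∫ z5 in Set.Ioi (0:ℝ), ∫ z4 in Set.Ioi (0:ℝ),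
          (if y < z4 then
            lam ^ k * z5 ^ (k - 1) / Real.Gamma k * Real.exp (-(lam * z5)) * mu ^ 4 *
              z5 * Real.exp (-(mu * (y + z4 + z5))) / (mu * (2 * mu))
          else 0) := by
        refine setIntegral_congr_fun measurableSet_Ioi fun z5 hz5 => ?_
        refine setIntegral_congr_fun measurableSet_Ioi fun z4 hz4 => ?_
        by_cases h4 : y < z4
        · simp only [if_pos h4]
          calc (∫ z3 in Set.Ioi (0:ℝ),
                lam ^ k * z5 ^ (k - 1) / Real.Gamma k * Real.exp (-(lam * z5)) * mu ^ 4 *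
                  z5 * Real.exp (-(mu * (y + 2 * z3 + z4 + z5))) / mu)
              = ∫ z3 in Set.Ioi (0:ℝ),
                  (lam ^ k * z5 ^ (k - 1) / Real.Gamma k * Real.exp (-(lam * z5)) * mu ^ 4 *
                    z5 * Real.exp (-(mu * (y + z4 + z5))) / mu) * Real.exp (-(2 * mu * z3)) := by
                refine setIntegral_congr_fun measurableSet_Ioi fun z3 _ => ?_
                have he : Real.exp (-(mu * (y + z4 + z5))) * Real.exp (-(2 * mu * z3))
                    = Real.exp (-(mu * (y + 2 * z3 + z4 + z5))) := by
                  rw [← Real.exp_add]; congr 1; ring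
                linear_combination (-(lam ^ k * z5 ^ (k - 1) / Real.Gamma k *
                  Real.exp (-(lam * z5)) * mu ^ 4 * z5 / mu)) * he
            _ = (lam ^ k * z5 ^ (k - 1) / Real.Gamma k * Real.exp (-(lam * z5)) * mu ^ 4 *
                  z5 * Real.exp (-(mu * (y + z4 + z5))) / mu) * (Real.exp (-(2 * mu * 0)) / (2 * mu)) := by
                rw [MeasureTheory.integral_const_mul, exp_int_aux h2mu]
            _ = lam ^ k * z5 ^ (k - 1) / Real.Gamma k * Real.exp (-(lam * z5)) * mu ^ 4 *
                  z5 * Real.exp (-(mu * (y + z4 + z5))) / (mu * (2 * mu)) := by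
                rw [mul_zero, neg_zero, Real.exp_zero]
                ring
        · simp only [if_neg h4, integral_zero]
    _ = ∫ z5 in Set.Ioi (0:ℝ),
          (lam ^ k * z5 ^ (k - 1) / Real.Gamma k * Real.exp (-(lam * z5)) * mu ^ 4 *
            z5 * Real.exp (-(mu * (y + z5))) / (mu * (2 * mu))) * (Real.exp (-(mu * y)) / mu) := by
        refine setIntegral_congr_fun measurableSet_Ioi fun z5 hz5 => ?_
        calc (∫ z4 in Set.Ioi (0:ℝ),
              (if y < z4 then
                lam ^ k * z5 ^ (k - 1) / Real.Gamma k * Real.exp (-(lam * z5)) * mu ^ 4 *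
                  z5 * Real.exp (-(mu * (y + z4 + z5))) / (mu * (2 * mu))
              else 0))
            = ∫ z4 in Set.Ioi (0:ℝ), (Set.Ioi y).indicator
                (fun z4 => lam ^ k * z5 ^ (k - 1) / Real.Gamma k * Real.exp (-(lam * z5)) * mu ^ 4 *
                  z5 * Real.exp (-(mu * (y + z4 + z5))) / (mu * (2 * mu))) z4 := by
              refine setIntegral_congr_fun measurableSet_Ioi fun z4 _ => ?_
              rw [Set.indicator_apply]
              exact if_congr (Set.mem_Ioi).symm rfl rfl
          _ = ∫ z4 in Set.Ioi 0 ∩ Set.Ioi y,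
                lam ^ k * z5 ^ (k - 1) / Real.Gamma k * Real.exp (-(lam * z5)) * mu ^ 4 *
                  z5 * Real.exp (-(mu * (y + z4 + z5))) / (mu * (2 * mu)) :=
              setIntegral_indicator measurableSet_Ioi
          _ = ∫ z4 in Set.Ioi y,
                lam ^ k * z5 ^ (k - 1) / Real.Gamma k * Real.exp (-(lam * z5)) * mu ^ 4 *
                  z5 * Real.exp (-(mu * (y + z4 + z5))) / (mu * (2 * mu)) := by
              rw [Set.inter_eq_right.mpr (Set.Ioi_subset_Ioi hy)]
          _ = ∫ z4 in Set.Ioi y,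
                (lam ^ k * z5 ^ (k - 1) / Real.Gamma k * Real.exp (-(lam * z5)) * mu ^ 4 *
                  z5 * Real.exp (-(mu * (y + z5))) / (mu * (2 * mu))) * Real.exp (-(mu * z4)) := by
              refine setIntegral_congr_fun measurableSet_Ioi fun z4 _ => ?_
              have he : Real.exp (-(mu * (y + z5))) * Real.exp (-(mu * z4))
                  = Real.exp (-(mu * (y + z4 + z5))) := by
                rw [← Real.exp_add]; congr 1; ring
              linear_combination (-(lam ^ k * z5 ^ (k - 1) / Real.Gamma k *
                Real.exp (-(lam * z5)) * mu ^ 4 * z5 / (mu * (2 * mu)))) * he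
          _ = (lam ^ k * z5 ^ (k - 1) / Real.Gamma k * Real.exp (-(lam * z5)) * mu ^ 4 *
                z5 * Real.exp (-(mu * (y + z5))) / (mu * (2 * mu))) * (Real.exp (-(mu * y)) / mu) := by
              rw [MeasureTheory.integral_const_mul, exp_int_aux hmu]
    _ = ∫ z5 in Set.Ioi (0:ℝ),
          (mu * Real.exp (-(2 * mu * y)) / 2 * (lam ^ k / Real.Gamma k)) *
            (z5 ^ k * Real.exp (-((lam + mu) * z5))) := by
        refine setIntegral_congr_fun measurableSet_Ioi fun z5 hz5 => ?_
        have hzp : z5 ^ (k - 1) * z5 = z5 ^ k := pow_sub_one_mul hk0 z5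
        have he : Real.exp (-(lam * z5)) * Real.exp (-(mu * (y + z5))) * Real.exp (-(mu * y))
            = Real.exp (-((lam + mu) * z5)) * Real.exp (-(2 * mu * y)) := by
          rw [← Real.exp_add, ← Real.exp_add, ← Real.exp_add]; congr 1; ring
        rw [← hzp]
        have h1 : mu ≠ 0 := hmu.ne'
        have h2 : Real.Gamma (k : ℝ) ≠ 0 := hΓpos.ne'
        field_simp
        rw [show -(mu * y * 2) = -(2 * mu * y) by ring, show -(z5 * (lam + mu)) = -((lam + mu) * z5) by ring]
        linear_combination (z5 * z5 ^ (k - 1)) * he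
    _ = (mu * Real.exp (-(2 * mu * y)) / 2 * (lam ^ k / Real.Gamma k)) *
          ((Nat.factorial k : ℝ) / (lam + mu) ^ (k + 1)) := by
        rw [MeasureTheory.integral_const_mul, pow_exp_int (by linarith)]
    _ = mu * k * Real.exp (-(2 * mu * y)) / 2 * (lam ^ k / (lam + mu) ^ (k + 1)) := by
        have hΓ : Real.Gamma (k : ℝ) = (Nat.factorial (k - 1) : ℝ) := by
          rw [show (k:ℝ) = ((k - 1 : ℕ) : ℝ) + 1 by
            rw [← Nat.cast_one (R := ℝ), ← Nat.cast_add]; congr 1; omega]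
          exact Real.Gamma_nat_eq_factorial _
        have hfact : (Nat.factorial k : ℝ) = (k : ℝ) * (Nat.factorial (k - 1) : ℝ) := by
          have h1 : Nat.factorial k = k * Nat.factorial (k - 1) := by
            conv_lhs => rw [show k = (k - 1) + 1 by omega]
            rw [Nat.factorial_succ]
            congr 1
            omega
          rw [h1]; push_cast; ring
        rw [hΓ, hfact]
        have hf0 : (Nat.factorial (k - 1) : ℝ) ≠ 0 := by
          exact_mod_cast (Nat.factorial_pos (k - 1)).ne'
        field_simp
end

section
/- Let $\lambda, \mu > 0$ and let $j, k$ be positive integers. Define $M = \frac{\lambda^{j+k} z_1^{j-1} z_2^{k-1}}{\Gamma(j)\Gamma(k)}$. Then for all $x, y \geq 0$, $\int_{\mathbb{R}_+^8} \mathbf{1}\{z_3 > x + z_1\}\mathbf{1}\{z_4 > x\}\mathbf{1}\{z_8 > y\}\mathbf{1}\{z_5 + z_6 - z_2 - z_7 > y\}\mathbf{1}\{z_7 + z_2 > z_5\}\, \mu^6 e^{-\mu(z_3+z_4+z_5+z_6+z_7+z_8)}\, M\, e^{-\lambda(z_1+z_2)}\, dz = \frac{1}{4}e^{-2\mu(x+y)}\left(\frac{\lambda}{\lambda+\mu}\right)^{j+k}\left(1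 + \frac{2\mu k}{\lambda+\mu}\right)$. -/
open MeasureTheory Real Set


lemma intOn_exp {a : ℝ} (ha : 0 < a) (c : ℝ) :
    IntegrableOn (fun z : ℝ => Real.exp (-(a * z))) (Ioi c) := by
  simpa [neg_mul] using exp_neg_integrableOn_Ioi c ha

lemma int_exp_Ioi_s12 {a : ℝ} (ha : 0 < a) (c : ℝ) :
    ∫ z in Ioi c, Real.exp (-(a * z)) = Real.exp (-(a * c)) / a := by
  have h : ∀ z ∈ Ici c, HasDerivAt (fun z : ℝ => -Real.exp (-(a * z)) / a)
      (Real.exp (-(a * z))) z := by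
    intro z _
    have h1 : HasDerivAt (fun z : ℝ => -(a * z)) (-a) z := by
      exact ((hasDerivAt_id z).const_mul a).neg.congr_deriv (by simp)
    have := (h1.exp.neg.div_const a)
    simpa [mul_comm, ha.ne'] using this
  have htend : Filter.Tendsto (fun z : ℝ => -Real.exp (-(a * z)) / a) Filter.atTop (nhds 0) := by
    have h2 : Filter.Tendsto (fun z : ℝ => -(a * z)) Filter.atTop Filter.atBot := by
      have := (Filter.tendsto_id (α := ℝ)).const_mul_atTop ha
      exact Filter.tendsto_neg_atBot_iff.mpr this
    have := (Real.tendsto_exp_atBot.comp h2).neg.div_const a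
    simpa using this
  have := integral_Ioi_of_hasDerivAt_of_tendsto' h (intOn_exp ha c) htend
  rw [this]
  field_simp
  ring

lemma intOn_pow_exp {a : ℝ} (ha : 0 < a) (n : ℕ) :
    IntegrableOn (fun z : ℝ => z ^ n * Real.exp (-(a * z))) (Ioi 0) := by
  have := integrableOn_rpow_mul_exp_neg_mul_rpow (p := 1) (s := n) (b := a)
    (lt_of_lt_of_le neg_one_lt_zero (Nat.cast_nonneg n)) one_pos ha
  refine this.congr_fun (fun z hz => ?_) measurableSet_Ioi
  beta_reduce
  rw [Real.rpow_one, Real.rpow_natCast, neg_mul]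

lemma int_pow_exp {a : ℝ} (ha : 0 < a) (n : ℕ) :
    ∫ z in Ioi 0, z ^ n * Real.exp (-(a * z)) = n.factorial / a ^ (n + 1) := by
  have h := Real.integral_rpow_mul_exp_neg_mul_Ioi (a := (n : ℝ) + 1) (r := a)
    (by positivity) ha
  rw [show ((n : ℝ) + 1 - 1) = (n : ℝ) by ring] at h
  have h2 : ∫ z in Ioi 0, z ^ n * Real.exp (-(a * z))
      = ∫ t in Ioi 0, t ^ (n : ℝ) * Real.exp (-(a * t)) := by
    refine setIntegral_congr_fun measurableSet_Ioi (fun z hz => ?_)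
    rw [Real.rpow_natCast]
  rw [h2, h, Real.Gamma_nat_eq_factorial,
    show ((n : ℝ) + 1) = ((n + 1 : ℕ) : ℝ) by push_cast; ring,
    Real.rpow_natCast, one_div, inv_pow, inv_mul_eq_div]

lemma int_ite_exp {a : ℝ} (ha : 0 < a) {c : ℝ} (hc : 0 ≤ c) (C : ℝ) :
    ∫ z in Ioi 0, (if z > c then C * Real.exp (-(a * z)) else 0)
      = C * (Real.exp (-(a * c)) / a) := by
  have h : ∀ z : ℝ, (if z > c then C * Real.exp (-(a * z)) else 0)
      = Set.indicator (Ioi c) (fun z => C * Real.exp (-(a * z))) z := by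
    intro z; rw [Set.indicator_apply]; simp [mem_Ioi]
  simp_rw [h]
  rw [integral_indicator measurableSet_Ioi, Measure.restrict_restrict measurableSet_Ioi,
    Set.Ioi_inter_Ioi, sup_eq_left.mpr hc, integral_const_mul, int_exp_Ioi_s12 ha]

lemma int_ite_const {b : ℝ} (hb : 0 ≤ b) (C : ℝ) :
    ∫ z in Ioi 0, (if b > z then C else 0) = C * b := by
  have h : ∀ z : ℝ, (if b > z then C else 0)
      = Set.indicator (Iio b) (fun _ => C) z := by
    intro z; rw [Set.indicator_apply]; simp [mem_Iio]
  simp_rw [h]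
  rw [integral_indicator measurableSet_Iio, Measure.restrict_restrict measurableSet_Iio,
    setIntegral_const, show Iio b ∩ Ioi 0 = Ioo 0 b by ext z; simp [mem_Ioo, and_comm],
    Real.volume_real_Ioo_of_le hb, smul_eq_mul, mul_comm]
  ring

lemma intOn_abs_pow_exp {a : ℝ} (ha : 0 < a) (n : ℕ) :
    IntegrableOn (fun z : ℝ => |z| ^ n * Real.exp (-(a * z))) (Ioi 0) := by
  refine (intOn_pow_exp ha n).congr_fun (fun z hz => ?_) measurableSet_Ioi
  rw [abs_of_pos (mem_Ioi.mp hz)]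

lemma lemA (lam mu x : ℝ) (hlam : 0 < lam) (hmu : 0 < mu) (hx : 0 ≤ x) (j : ℕ) (hj : 1 ≤ j) :
    ∫ z3 in Ioi (0:ℝ), ∫ z1 in Ioi (0:ℝ),
      (if z3 > x + z1 then (z1 ^ (j-1) * Real.exp (-(lam * z1))) * Real.exp (-(mu * z3)) else 0)
    = Real.exp (-(mu * x)) / mu * ((j-1).factorial / (lam + mu) ^ j) := by
  have hint : Integrable (Function.uncurry fun z3 z1 : ℝ =>
      (if z3 > x + z1 then (z1 ^ (j-1) * Real.exp (-(lam * z1))) * Real.exp (-(mu * z3)) else 0))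
      ((volume.restrict (Ioi 0)).prod (volume.restrict (Ioi 0))) := by
    have hg : Integrable (fun p : ℝ × ℝ =>
        Real.exp (-(mu * p.1)) * (|p.2| ^ (j-1) * Real.exp (-(lam * p.2))))
        ((volume.restrict (Ioi 0)).prod (volume.restrict (Ioi 0))) :=
      Integrable.mul_prod (intOn_exp hmu 0) (intOn_abs_pow_exp hlam (j-1))
    refine hg.mono' ?_ (Filter.Eventually.of_forall fun p => ?_)
    · apply Measurable.aestronglyMeasurable
      refine Measurable.ite ?_ (by fun_prop) measurable_const
      exact measurableSet_lt (measurable_const.add measurable_snd) measurable_fst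
    · rw [Function.uncurry]
      split_ifs with h
      · rw [Real.norm_eq_abs, abs_mul, abs_mul, abs_exp, abs_exp, abs_pow]
        exact le_of_eq (by ring)
      · simp [norm_zero]
        positivity
  rw [integral_integral_swap hint]
  have h1 : ∀ z1 ∈ Ioi (0:ℝ),
      (∫ z3 in Ioi (0:ℝ), (if z3 > x + z1 then
        (z1 ^ (j-1) * Real.exp (-(lam * z1))) * Real.exp (-(mu * z3)) else 0))
      = (z1 ^ (j-1) * Real.exp (-(lam * z1))) * (Real.exp (-(mu * (x + z1))) / mu) := by
    intro z1 hz1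
    exact int_ite_exp hmu (by have := mem_Ioi.mp hz1; linarith) _
  rw [setIntegral_congr_fun measurableSet_Ioi h1]
  have h2 : ∀ z1 ∈ Ioi (0:ℝ),
      (z1 ^ (j-1) * Real.exp (-(lam * z1))) * (Real.exp (-(mu * (x + z1))) / mu)
      = (Real.exp (-(mu * x)) / mu) * (z1 ^ (j-1) * Real.exp (-((lam + mu) * z1))) := by
    intro z1 _
    rw [show -(mu * (x + z1)) = -(mu*x) + -(mu*z1) by ring, Real.exp_add,
      show -((lam + mu) * z1) = -(lam*z1) + -(mu*z1) by ring, Real.exp_add]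
    ring
  rw [setIntegral_congr_fun measurableSet_Ioi h2, integral_const_mul, int_pow_exp (by linarith) (j-1),
    Nat.sub_add_cancel hj]

lemma lemB (lam mu y : ℝ) (hlam : 0 < lam) (hmu : 0 < mu) (hy : 0 ≤ y) (k : ℕ) (hk : 1 ≤ k) :
    (∫ z7 in Ioi (0:ℝ), ∫ z6 in Ioi (0:ℝ), ∫ z5 in Ioi (0:ℝ), ∫ z2 in Ioi (0:ℝ),
      (if z5 + z6 - z2 - z7 > y ∧ z7 + z2 > z5 then
        (z2 ^ (k-1) * Real.exp (-(lam * z2))) * Real.exp (-(mu * (z5 + z6 + z7))) else 0))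
    = Real.exp (-(mu * y)) / mu *
        ((k-1).factorial / (lam + mu) ^ k / (4 * mu ^ 2)
          + k.factorial / (lam + mu) ^ (k + 1) / (2 * mu)) := by
  -- Step S1: swap z5 and z2
  have S1 : ∀ z6 z7 : ℝ, (∫ z5 in Ioi (0:ℝ), ∫ z2 in Ioi (0:ℝ),
      (if z5 + z6 - z2 - z7 > y ∧ z7 + z2 > z5 then
        (z2 ^ (k-1) * Real.exp (-(lam * z2))) * Real.exp (-(mu * (z5 + z6 + z7))) else 0))
      = ∫ z2 in Ioi (0:ℝ), ∫ z5 in Ioi (0:ℝ),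
      (if z5 + z6 - z2 - z7 > y ∧ z7 + z2 > z5 then
        (z2 ^ (k-1) * Real.exp (-(lam * z2))) * Real.exp (-(mu * (z5 + z6 + z7))) else 0) := by
    intro z6 z7
    have h2nd : Integrable (fun z : ℝ => Real.exp (-(mu * (z6 + z7))) *
        (|z| ^ (k-1) * Real.exp (-(lam * z)))) (volume.restrict (Ioi 0)) :=
      (intOn_abs_pow_exp hlam (k-1)).const_mul _
    have hg := (intOn_exp hmu 0).mul_prod h2nd
    have hint : Integrable (Function.uncurry fun z5 z2 : ℝ =>
        (if z5 + z6 - z2 - z7 > y ∧ z7 + z2 > z5 then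
          (z2 ^ (k-1) * Real.exp (-(lam * z2))) * Real.exp (-(mu * (z5 + z6 + z7))) else 0))
        ((volume.restrict (Ioi 0)).prod (volume.restrict (Ioi 0))) := by
      refine hg.mono' ?_ (Filter.Eventually.of_forall fun p => ?_)
      · apply Measurable.aestronglyMeasurable
        have h1 : MeasurableSet {p : ℝ × ℝ | p.1 + z6 - p.2 - z7 > y ∧ z7 + p.2 > p.1} := by
          rw [Set.setOf_and]
          exact (measurableSet_lt measurable_const (by fun_prop)).inter
            (measurableSet_lt (by fun_prop) (by fun_prop))
        exact Measurable.ite h1 (by fun_prop) measurable_const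
      · rw [Function.uncurry]
        split_ifs with h
        · rw [Real.norm_eq_abs, abs_mul, abs_mul, abs_exp, abs_exp, abs_pow,
            show -(mu * (p.1 + z6 + z7)) = -(mu * p.1) + -(mu * (z6 + z7)) by ring,
            Real.exp_add]
          exact le_of_eq (by ring)
        · simp only [norm_zero]; positivity
    exact integral_integral_swap hint
  -- Step S2: swap z6 and z2 (inner function is an integral over z5)
  have S2 : ∀ z7 : ℝ, (∫ z6 in Ioi (0:ℝ), ∫ z2 in Ioi (0:ℝ), ∫ z5 in Ioi (0:ℝ),
      (if z5 + z6 - z2 - z7 > y ∧ z7 + z2 > z5 then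
        (z2 ^ (k-1) * Real.exp (-(lam * z2))) * Real.exp (-(mu * (z5 + z6 + z7))) else 0))
      = ∫ z2 in Ioi (0:ℝ), ∫ z6 in Ioi (0:ℝ), ∫ z5 in Ioi (0:ℝ),
      (if z5 + z6 - z2 - z7 > y ∧ z7 + z2 > z5 then
        (z2 ^ (k-1) * Real.exp (-(lam * z2))) * Real.exp (-(mu * (z5 + z6 + z7))) else 0) := by
    intro z7
    have h2nd : Integrable (fun z : ℝ => Real.exp (-(mu * z7)) / mu *
        (|z| ^ (k-1) * Real.exp (-(lam * z)))) (volume.restrict (Ioi 0)) :=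
      (intOn_abs_pow_exp hlam (k-1)).const_mul _
    have hg := (intOn_exp hmu 0).mul_prod h2nd
    have hF : StronglyMeasurable (fun q : (ℝ × ℝ) × ℝ =>
        (if q.2 + q.1.1 - q.1.2 - z7 > y ∧ z7 + q.1.2 > q.2 then
          (q.1.2 ^ (k-1) * Real.exp (-(lam * q.1.2))) * Real.exp (-(mu * (q.2 + q.1.1 + z7)))
        else 0)) := by
      apply Measurable.stronglyMeasurable
      have h1 : MeasurableSet {q : (ℝ × ℝ) × ℝ | q.2 + q.1.1 - q.1.2 - z7 > y ∧ z7 + q.1.2 > q.2} := by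
        rw [Set.setOf_and]
        exact (measurableSet_lt measurable_const (by fun_prop)).inter
          (measurableSet_lt (by fun_prop) (by fun_prop))
      exact Measurable.ite h1 (by fun_prop) measurable_const
    have hint : Integrable (Function.uncurry fun z6 z2 : ℝ => ∫ z5 in Ioi (0:ℝ),
        (if z5 + z6 - z2 - z7 > y ∧ z7 + z2 > z5 then
          (z2 ^ (k-1) * Real.exp (-(lam * z2))) * Real.exp (-(mu * (z5 + z6 + z7))) else 0))
        ((volume.restrict (Ioi 0)).prod (volume.restrict (Ioi 0))) := by
      refine hg.mono' hF.integral_prod_right'.aestronglyMeasurable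
        (Filter.Eventually.of_forall fun p => ?_)
      rw [Function.uncurry]
      have hb : ∀ z5 : ℝ, ‖(if z5 + p.1 - p.2 - z7 > y ∧ z7 + p.2 > z5 then
          (p.2 ^ (k-1) * Real.exp (-(lam * p.2))) * Real.exp (-(mu * (z5 + p.1 + z7))) else 0)‖
          ≤ Real.exp (-(mu * z5)) * (Real.exp (-(mu * (p.1 + z7))) * (|p.2| ^ (k-1) *
              Real.exp (-(lam * p.2)))) := by
        intro z5
        split_ifs with h
        · rw [Real.norm_eq_abs, abs_mul, abs_mul, abs_exp, abs_exp, abs_pow,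
            show -(mu * (z5 + p.1 + z7)) = -(mu * z5) + -(mu * (p.1 + z7)) by ring, Real.exp_add]
          exact le_of_eq (by ring)
        · simp only [norm_zero]; positivity
      calc ‖∫ z5 in Ioi (0:ℝ), (if z5 + p.1 - p.2 - z7 > y ∧ z7 + p.2 > z5 then
            (p.2 ^ (k-1) * Real.exp (-(lam * p.2))) * Real.exp (-(mu * (z5 + p.1 + z7))) else 0)‖
          ≤ ∫ z5 in Ioi (0:ℝ), Real.exp (-(mu * z5)) * (Real.exp (-(mu * (p.1 + z7))) *
              (|p.2| ^ (k-1) * Real.exp (-(lam * p.2)))) := by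
            refine norm_integral_le_of_norm_le ((intOn_exp hmu 0).mul_const _)
              (Filter.Eventually.of_forall hb)
        _ = Real.exp (-(mu * p.1)) * (Real.exp (-(mu * z7)) / mu *
              (|p.2| ^ (k-1) * Real.exp (-(lam * p.2)))) := by
            rw [integral_mul_const, int_exp_Ioi_s12 hmu 0, mul_zero, neg_zero, Real.exp_zero,
              show -(mu * (p.1 + z7)) = -(mu * p.1) + -(mu * z7) by ring, Real.exp_add]
            ring
    exact integral_integral_swap hint
  -- Step S3: swap z6 and z5
  have S3 : ∀ z7 z2 : ℝ, (∫ z6 in Ioi (0:ℝ), ∫ z5 in Ioi (0:ℝ),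
      (if z5 + z6 - z2 - z7 > y ∧ z7 + z2 > z5 then
        (z2 ^ (k-1) * Real.exp (-(lam * z2))) * Real.exp (-(mu * (z5 + z6 + z7))) else 0))
      = ∫ z5 in Ioi (0:ℝ), ∫ z6 in Ioi (0:ℝ),
      (if z5 + z6 - z2 - z7 > y ∧ z7 + z2 > z5 then
        (z2 ^ (k-1) * Real.exp (-(lam * z2))) * Real.exp (-(mu * (z5 + z6 + z7))) else 0) := by
    intro z7 z2
    have h2nd : Integrable (fun z : ℝ => (|z2 ^ (k-1) * Real.exp (-(lam * z2))| *
        Real.exp (-(mu * z7))) * Real.exp (-(mu * z))) (volume.restrict (Ioi 0)) :=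
      (intOn_exp hmu 0).const_mul _
    have hg := (intOn_exp hmu 0).mul_prod h2nd
    have hint : Integrable (Function.uncurry fun z6 z5 : ℝ =>
        (if z5 + z6 - z2 - z7 > y ∧ z7 + z2 > z5 then
          (z2 ^ (k-1) * Real.exp (-(lam * z2))) * Real.exp (-(mu * (z5 + z6 + z7))) else 0))
        ((volume.restrict (Ioi 0)).prod (volume.restrict (Ioi 0))) := by
      refine hg.mono' ?_ (Filter.Eventually.of_forall fun p => ?_)
      · apply Measurable.aestronglyMeasurable
        have h1 : MeasurableSet {p : ℝ × ℝ | p.2 + p.1 - z2 - z7 > y ∧ z7 + z2 > p.2} := by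
          rw [Set.setOf_and]
          exact (measurableSet_lt measurable_const (by fun_prop)).inter
            (measurableSet_lt (by fun_prop) (by fun_prop))
        exact Measurable.ite h1 (by fun_prop) measurable_const
      · rw [Function.uncurry]
        split_ifs with h
        · rw [Real.norm_eq_abs, abs_mul, abs_exp,
            show -(mu * (p.2 + p.1 + z7)) = -(mu * p.1) + (-(mu * z7) + -(mu * p.2)) by ring,
            Real.exp_add, Real.exp_add]
          exact le_of_eq (by ring)
        · simp only [norm_zero]; positivity
    exact integral_integral_swap hint
  -- Evaluate z6 integral
  have Ev6 : ∀ z7 ∈ Ioi (0:ℝ), ∀ z2 ∈ Ioi (0:ℝ), ∀ z5 ∈ Ioi (0:ℝ),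
      (∫ z6 in Ioi (0:ℝ),
        (if z5 + z6 - z2 - z7 > y ∧ z7 + z2 > z5 then
          (z2 ^ (k-1) * Real.exp (-(lam * z2))) * Real.exp (-(mu * (z5 + z6 + z7))) else 0))
      = (if z7 + z2 > z5 then
          (z2 ^ (k-1) * Real.exp (-(lam * z2))) * (Real.exp (-(mu * (y + z2 + 2*z7))) / mu)
        else 0) := by
    intro z7 hz7 z2 hz2 z5 hz5
    by_cases hc : z7 + z2 > z5
    · have key : ∀ z6 : ℝ,
          (if z5 + z6 - z2 - z7 > y ∧ z7 + z2 > z5 then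
            (z2 ^ (k-1) * Real.exp (-(lam * z2))) * Real.exp (-(mu * (z5 + z6 + z7))) else 0)
          = (if z6 > y + z2 + z7 - z5 then
              ((z2 ^ (k-1) * Real.exp (-(lam * z2))) * Real.exp (-(mu * (z5 + z7)))) *
                Real.exp (-(mu * z6)) else 0) := by
        intro z6
        split_ifs with h1 h2 h2
        · rw [show -(mu * (z5 + z6 + z7)) = -(mu * (z5 + z7)) + -(mu * z6) by ring,
            Real.exp_add]
          ring
        · exact absurd (by linarith [h1.1] : z6 > y + z2 + z7 - z5) h2
        · exact absurd ⟨by linarith, hc⟩ h1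
        · rfl
      simp only [key]
      rw [int_ite_exp hmu (by linarith : (0:ℝ) ≤ y + z2 + z7 - z5), if_pos hc]
      have hexp : Real.exp (-(mu * (z5 + z7))) * Real.exp (-(mu * (y + z2 + z7 - z5)))
          = Real.exp (-(mu * (y + z2 + 2*z7))) := by
        rw [← Real.exp_add]; ring_nf
      rw [div_eq_mul_inv, div_eq_mul_inv, ← hexp]; ring
    · have key : ∀ z6 : ℝ,
          (if z5 + z6 - z2 - z7 > y ∧ z7 + z2 > z5 then
            (z2 ^ (k-1) * Real.exp (-(lam * z2))) * Real.exp (-(mu * (z5 + z6 + z7))) else 0)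
          = 0 := by
        intro z6; exact if_neg (fun hh => hc hh.2)
      simp only [key, integral_zero, if_neg hc]
  -- Evaluate z5 integral
  have Ev5 : ∀ z7 ∈ Ioi (0:ℝ), ∀ z2 ∈ Ioi (0:ℝ),
      (∫ z5 in Ioi (0:ℝ), (if z7 + z2 > z5 then
        (z2 ^ (k-1) * Real.exp (-(lam * z2))) * (Real.exp (-(mu * (y + z2 + 2*z7))) / mu)
        else 0))
      = ((z2 ^ (k-1) * Real.exp (-(lam * z2))) * (Real.exp (-(mu * (y + z2 + 2*z7))) / mu))
          * (z7 + z2) := by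
    intro z7 hz7 z2 hz2
    exact int_ite_const (by simp only [mem_Ioi] at hz7 hz2; linarith) _
  -- Evaluate z2 integral
  have Ev2 : ∀ z7 : ℝ,
      (∫ z2 in Ioi (0:ℝ),
        ((z2 ^ (k-1) * Real.exp (-(lam * z2))) * (Real.exp (-(mu * (y + z2 + 2*z7))) / mu))
          * (z7 + z2))
      = (Real.exp (-(mu * (y + 2*z7))) / mu) *
          (z7 * ((k-1).factorial / (lam + mu) ^ k) + k.factorial / (lam + mu) ^ (k + 1)) := by
    intro z7
    have hpow : ∀ z2 : ℝ, z2 ^ (k-1) * z2 = z2 ^ k := by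
      intro z2; rw [← pow_succ, Nat.sub_add_cancel hk]
    have key : ∀ z2 : ℝ,
        ((z2 ^ (k-1) * Real.exp (-(lam * z2))) * (Real.exp (-(mu * (y + z2 + 2*z7))) / mu))
          * (z7 + z2)
        = (Real.exp (-(mu * (y + 2*z7))) / mu) *
            (z7 * (z2 ^ (k-1) * Real.exp (-((lam + mu) * z2)))
              + z2 ^ k * Real.exp (-((lam + mu) * z2))) := by
      intro z2
      rw [show -(mu * (y + z2 + 2*z7)) = -(mu * (y + 2*z7)) + -(mu * z2) by ring, Real.exp_add,
        show -((lam + mu) * z2) = -(lam * z2) + -(mu * z2) by ring, Real.exp_add, ← hpow z2]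
      ring
    simp only [key]
    rw [integral_const_mul, integral_add
      (((intOn_pow_exp (by linarith : (0:ℝ) < lam + mu) (k-1)).const_mul z7))
      (intOn_pow_exp (by linarith : (0:ℝ) < lam + mu) k),
      integral_const_mul, int_pow_exp (by linarith : (0:ℝ) < lam + mu) (k-1),
      int_pow_exp (by linarith : (0:ℝ) < lam + mu) k, Nat.sub_add_cancel hk]
  -- Evaluate z7 integral
  have Ev7 : (∫ z7 in Ioi (0:ℝ), (Real.exp (-(mu * (y + 2*z7))) / mu) *
        (z7 * ((k-1).factorial / (lam + mu) ^ k) + k.factorial / (lam + mu) ^ (k + 1)))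
      = Real.exp (-(mu * y)) / mu *
          ((k-1).factorial / (lam + mu) ^ k / (4 * mu ^ 2)
            + k.factorial / (lam + mu) ^ (k + 1) / (2 * mu)) := by
    have key : ∀ z7 : ℝ, (Real.exp (-(mu * (y + 2*z7))) / mu) *
        (z7 * ((k-1).factorial / (lam + mu) ^ k) + k.factorial / (lam + mu) ^ (k + 1))
        = (Real.exp (-(mu * y)) / mu) *
            (((k-1).factorial / (lam + mu) ^ k) * (z7 ^ 1 * Real.exp (-((2*mu) * z7)))
              + (k.factorial / (lam + mu) ^ (k + 1)) * (z7 ^ 0 * Real.exp (-((2*mu) * z7)))) := by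
      intro z7
      rw [show -(mu * (y + 2*z7)) = -(mu * y) + -((2*mu) * z7) by ring, Real.exp_add]
      ring
    simp only [key]
    rw [integral_const_mul, integral_add
      ((intOn_pow_exp (by linarith : (0:ℝ) < 2*mu) 1).const_mul _)
      ((intOn_pow_exp (by linarith : (0:ℝ) < 2*mu) 0).const_mul _),
      integral_const_mul, integral_const_mul,
      int_pow_exp (by linarith : (0:ℝ) < 2*mu) 1, int_pow_exp (by linarith : (0:ℝ) < 2*mu) 0]
    have h : mu ≠ 0 := ne_of_gt hmu
    norm_num [Nat.factorial]
    field_simp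
    left
    ring
  calc (∫ z7 in Ioi (0:ℝ), ∫ z6 in Ioi (0:ℝ), ∫ z5 in Ioi (0:ℝ), ∫ z2 in Ioi (0:ℝ),
      (if z5 + z6 - z2 - z7 > y ∧ z7 + z2 > z5 then
        (z2 ^ (k-1) * Real.exp (-(lam * z2))) * Real.exp (-(mu * (z5 + z6 + z7))) else 0))
      = ∫ z7 in Ioi (0:ℝ), ∫ z2 in Ioi (0:ℝ), ∫ z5 in Ioi (0:ℝ), ∫ z6 in Ioi (0:ℝ),
        (if z5 + z6 - z2 - z7 > y ∧ z7 + z2 > z5 then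
          (z2 ^ (k-1) * Real.exp (-(lam * z2))) * Real.exp (-(mu * (z5 + z6 + z7))) else 0) := by
        refine setIntegral_congr_fun measurableSet_Ioi fun z7 _ => ?_
        rw [show (∫ z6 in Ioi (0:ℝ), ∫ z5 in Ioi (0:ℝ), ∫ z2 in Ioi (0:ℝ),
          (if z5 + z6 - z2 - z7 > y ∧ z7 + z2 > z5 then
            (z2 ^ (k-1) * Real.exp (-(lam * z2))) * Real.exp (-(mu * (z5 + z6 + z7))) else 0))
          = ∫ z6 in Ioi (0:ℝ), ∫ z2 in Ioi (0:ℝ), ∫ z5 in Ioi (0:ℝ),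
          (if z5 + z6 - z2 - z7 > y ∧ z7 + z2 > z5 then
            (z2 ^ (k-1) * Real.exp (-(lam * z2))) * Real.exp (-(mu * (z5 + z6 + z7))) else 0)
          from setIntegral_congr_fun measurableSet_Ioi fun z6 _ => S1 z6 z7, S2 z7]
        exact setIntegral_congr_fun measurableSet_Ioi fun z2 _ => S3 z7 z2
    _ = ∫ z7 in Ioi (0:ℝ), ∫ z2 in Ioi (0:ℝ), ∫ z5 in Ioi (0:ℝ),
        (if z7 + z2 > z5 then
          (z2 ^ (k-1) * Real.exp (-(lam * z2))) * (Real.exp (-(mu * (y + z2 + 2*z7))) / mu)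
        else 0) := by
        refine setIntegral_congr_fun measurableSet_Ioi fun z7 hz7 => ?_
        refine setIntegral_congr_fun measurableSet_Ioi fun z2 hz2 => ?_
        refine setIntegral_congr_fun measurableSet_Ioi fun z5 hz5 => ?_
        exact Ev6 z7 hz7 z2 hz2 z5 hz5
    _ = ∫ z7 in Ioi (0:ℝ), ∫ z2 in Ioi (0:ℝ),
        ((z2 ^ (k-1) * Real.exp (-(lam * z2))) * (Real.exp (-(mu * (y + z2 + 2*z7))) / mu))
          * (z7 + z2) := by
        refine setIntegral_congr_fun measurableSet_Ioi fun z7 hz7 => ?_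
        refine setIntegral_congr_fun measurableSet_Ioi fun z2 hz2 => ?_
        exact Ev5 z7 hz7 z2 hz2
    _ = ∫ z7 in Ioi (0:ℝ), (Real.exp (-(mu * (y + 2*z7))) / mu) *
          (z7 * ((k-1).factorial / (lam + mu) ^ k) + k.factorial / (lam + mu) ^ (k + 1)) := by
        refine setIntegral_congr_fun measurableSet_Ioi fun z7 _ => Ev2 z7
    _ = Real.exp (-(mu * y)) / mu *
          ((k-1).factorial / (lam + mu) ^ k / (4 * mu ^ 2)
            + k.factorial / (lam + mu) ^ (k + 1) / (2 * mu)) := Ev7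


theorem disjoint_pairs_first_term (lam mu : ℝ) (hlam : 0 < lam) (hmu : 0 < mu)
    (j k : ℕ) (hj : 1 ≤ j) (hk : 1 ≤ k) (x y : ℝ) (hx : 0 ≤ x) (hy : 0 ≤ y) :
    (∫ z8 in Set.Ioi (0:ℝ), ∫ z7 in Set.Ioi (0:ℝ), ∫ z6 in Set.Ioi (0:ℝ),
      ∫ z5 in Set.Ioi (0:ℝ), ∫ z4 in Set.Ioi (0:ℝ), ∫ z3 in Set.Ioi (0:ℝ),
        ∫ z2 in Set.Ioi (0:ℝ), ∫ z1 in Set.Ioi (0:ℝ),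
          (if z3 > x + z1 ∧ z4 > x ∧ z8 > y ∧ z5 + z6 - z2 - z7 > y ∧ z7 + z2 > z5 then
            mu ^ 6 * Real.exp (-(mu * (z3 + z4 + z5 + z6 + z7 + z8))) *
              (lam ^ (j + k) * z1 ^ (j - 1) * z2 ^ (k - 1) /
                (Real.Gamma j * Real.Gamma k)) *
              Real.exp (-(lam * (z1 + z2)))
          else 0)) =
      1 / 4 * Real.exp (-(2 * mu * (x + y))) * (lam / (lam + mu)) ^ (j + k) *
        (1 + 2 * mu * k / (lam + mu)) := by
  have hlm : (0:ℝ) < lam + mu := by linarith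
  have Hg4 : (∫ z4 in Set.Ioi (0:ℝ), (if z4 > x then Real.exp (-(mu * z4)) else 0)) = Real.exp (-(mu * x)) / mu := by
    have := int_ite_exp hmu hx (1:ℝ)
    simpa using this
  have Hg8 : (∫ z8 in Set.Ioi (0:ℝ), (if z8 > y then Real.exp (-(mu * z8)) else 0)) = Real.exp (-(mu * y)) / mu := by
    have := int_ite_exp hmu hy (1:ℝ)
    simpa using this
  have hbody : ∀ z1 z2 z3 z4 z5 z6 z7 z8 : ℝ,
      (if z3 > x + z1 ∧ z4 > x ∧ z8 > y ∧ z5 + z6 - z2 - z7 > y ∧ z7 + z2 > z5 then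
            mu ^ 6 * Real.exp (-(mu * (z3 + z4 + z5 + z6 + z7 + z8))) *
              (lam ^ (j + k) * z1 ^ (j - 1) * z2 ^ (k - 1) /
                (Real.Gamma j * Real.Gamma k)) *
              Real.exp (-(lam * (z1 + z2)))
          else 0)
      = (mu ^ 6 * lam ^ (j + k) / (Real.Gamma j * Real.Gamma k)) * (if z8 > y then Real.exp (-(mu * z8)) else 0) * (if z4 > x then Real.exp (-(mu * z4)) else 0) * (if z5 + z6 - z2 - z7 > y ∧ z7 + z2 > z5 then (z2 ^ (k-1) * Real.exp (-(lam * z2))) * Real.exp (-(mu * (z5 + z6 + z7))) else 0) * (if z3 > x + z1 then (z1 ^ (j-1) * Real.exp (-(lam * z1))) * Real.exp (-(mu * z3)) else 0) := by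
    intro z1 z2 z3 z4 z5 z6 z7 z8
    by_cases h1 : z3 > x + z1 <;> by_cases h2 : z4 > x <;> by_cases h3 : z8 > y <;>
      by_cases h4 : z5 + z6 - z2 - z7 > y <;> by_cases h5 : z7 + z2 > z5 <;>
      simp only [h1, h2, h3, h4, h5, if_true, if_false, true_and, false_and, and_true,
        and_false, and_self, if_neg, if_pos, not_false_iff, mul_zero, zero_mul] <;>
      try ring1
    all_goals rw [show -(mu * (z3 + z4 + z5 + z6 + z7 + z8))
        = -(mu * z8) + (-(mu * z4) + (-(mu * (z5 + z6 + z7)) + -(mu * z3))) by ring,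
      Real.exp_add, Real.exp_add, Real.exp_add,
      show -(lam * (z1 + z2)) = -(lam * z1) + -(lam * z2) by ring, Real.exp_add]
    ring
  have H1 : ∀ z2 z3 z4 z5 z6 z7 z8 : ℝ,
      (∫ z1 in Set.Ioi (0:ℝ), (if z3 > x + z1 ∧ z4 > x ∧ z8 > y ∧ z5 + z6 - z2 - z7 > y ∧ z7 + z2 > z5 then
            mu ^ 6 * Real.exp (-(mu * (z3 + z4 + z5 + z6 + z7 + z8))) *
              (lam ^ (j + k) * z1 ^ (j - 1) * z2 ^ (k - 1) /
                (Real.Gamma j * Real.Gamma k)) *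
              Real.exp (-(lam * (z1 + z2)))
          else 0))
      = ((mu ^ 6 * lam ^ (j + k) / (Real.Gamma j * Real.Gamma k)) * (if z8 > y then Real.exp (-(mu * z8)) else 0) * (if z4 > x then Real.exp (-(mu * z4)) else 0) * (if z5 + z6 - z2 - z7 > y ∧ z7 + z2 > z5 then (z2 ^ (k-1) * Real.exp (-(lam * z2))) * Real.exp (-(mu * (z5 + z6 + z7))) else 0)) * (∫ z1 in Set.Ioi (0:ℝ), (if z3 > x + z1 then (z1 ^ (j-1) * Real.exp (-(lam * z1))) * Real.exp (-(mu * z3)) else 0)) := by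
    intro z2 z3 z4 z5 z6 z7 z8
    simp only [hbody]
    exact integral_const_mul _ _
  have H2 : ∀ z3 z4 z5 z6 z7 z8 : ℝ,
      (∫ z2 in Set.Ioi (0:ℝ), ∫ z1 in Set.Ioi (0:ℝ), (if z3 > x + z1 ∧ z4 > x ∧ z8 > y ∧ z5 + z6 - z2 - z7 > y ∧ z7 + z2 > z5 then
            mu ^ 6 * Real.exp (-(mu * (z3 + z4 + z5 + z6 + z7 + z8))) *
              (lam ^ (j + k) * z1 ^ (j - 1) * z2 ^ (k - 1) /
                (Real.Gamma j * Real.Gamma k)) *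
              Real.exp (-(lam * (z1 + z2)))
          else 0))
      = ((mu ^ 6 * lam ^ (j + k) / (Real.Gamma j * Real.Gamma k)) * (if z8 > y then Real.exp (-(mu * z8)) else 0) * (if z4 > x then Real.exp (-(mu * z4)) else 0) * (∫ z1 in Set.Ioi (0:ℝ), (if z3 > x + z1 then (z1 ^ (j-1) * Real.exp (-(lam * z1))) * Real.exp (-(mu * z3)) else 0))) * (∫ z2 in Set.Ioi (0:ℝ), (if z5 + z6 - z2 - z7 > y ∧ z7 + z2 > z5 then (z2 ^ (k-1) * Real.exp (-(lam * z2))) * Real.exp (-(mu * (z5 + z6 + z7))) else 0)) := by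
    intro z3 z4 z5 z6 z7 z8
    simp only [H1]
    rw [show (fun z2 : ℝ => ((mu ^ 6 * lam ^ (j + k) / (Real.Gamma j * Real.Gamma k)) * (if z8 > y then Real.exp (-(mu * z8)) else 0) * (if z4 > x then Real.exp (-(mu * z4)) else 0) * (if z5 + z6 - z2 - z7 > y ∧ z7 + z2 > z5 then (z2 ^ (k-1) * Real.exp (-(lam * z2))) * Real.exp (-(mu * (z5 + z6 + z7))) else 0)) * (∫ z1 in Set.Ioi (0:ℝ), (if z3 > x + z1 then (z1 ^ (j-1) * Real.exp (-(lam * z1))) * Real.exp (-(mu * z3)) else 0)))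
        = fun z2 : ℝ => ((mu ^ 6 * lam ^ (j + k) / (Real.Gamma j * Real.Gamma k)) * (if z8 > y then Real.exp (-(mu * z8)) else 0) * (if z4 > x then Real.exp (-(mu * z4)) else 0) * (∫ z1 in Set.Ioi (0:ℝ), (if z3 > x + z1 then (z1 ^ (j-1) * Real.exp (-(lam * z1))) * Real.exp (-(mu * z3)) else 0))) * (if z5 + z6 - z2 - z7 > y ∧ z7 + z2 > z5 then (z2 ^ (k-1) * Real.exp (-(lam * z2))) * Real.exp (-(mu * (z5 + z6 + z7))) else 0) from funext fun z2 => by ring]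
    exact integral_const_mul _ _
  have H3 : ∀ z4 z5 z6 z7 z8 : ℝ,
      (∫ z3 in Set.Ioi (0:ℝ), ∫ z2 in Set.Ioi (0:ℝ), ∫ z1 in Set.Ioi (0:ℝ), (if z3 > x + z1 ∧ z4 > x ∧ z8 > y ∧ z5 + z6 - z2 - z7 > y ∧ z7 + z2 > z5 then
            mu ^ 6 * Real.exp (-(mu * (z3 + z4 + z5 + z6 + z7 + z8))) *
              (lam ^ (j + k) * z1 ^ (j - 1) * z2 ^ (k - 1) /
                (Real.Gamma j * Real.Gamma k)) *
              Real.exp (-(lam * (z1 + z2)))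
          else 0))
      = ((mu ^ 6 * lam ^ (j + k) / (Real.Gamma j * Real.Gamma k)) * (if z8 > y then Real.exp (-(mu * z8)) else 0) * (if z4 > x then Real.exp (-(mu * z4)) else 0) * (∫ z2 in Set.Ioi (0:ℝ), (if z5 + z6 - z2 - z7 > y ∧ z7 + z2 > z5 then (z2 ^ (k-1) * Real.exp (-(lam * z2))) * Real.exp (-(mu * (z5 + z6 + z7))) else 0))) * (Real.exp (-(mu * x)) / mu * ((j-1).factorial / (lam + mu) ^ j)) := by
    intro z4 z5 z6 z7 z8
    simp only [H2]
    rw [show (fun z3 : ℝ => ((mu ^ 6 * lam ^ (j + k) / (Real.Gamma j * Real.Gamma k)) * (if z8 > y then Real.exp (-(mu * z8)) else 0) * (if z4 > x then Real.exp (-(mu * z4)) else 0) * (∫ z1 in Set.Ioi (0:ℝ), (if z3 > x + z1 then (z1 ^ (j-1) * Real.exp (-(lam * z1))) * Real.exp (-(mu * z3)) else 0))) * (∫ z2 in Set.Ioi (0:ℝ), (if z5 + z6 - z2 - z7 > y ∧ z7 + z2 > z5 then (z2 ^ (k-1) * Real.exp (-(lam * z2))) * Real.exp (-(mu * (z5 +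 z6 + z7))) else 0)))
        = fun z3 : ℝ => ((mu ^ 6 * lam ^ (j + k) / (Real.Gamma j * Real.Gamma k)) * (if z8 > y then Real.exp (-(mu * z8)) else 0) * (if z4 > x then Real.exp (-(mu * z4)) else 0) * (∫ z2 in Set.Ioi (0:ℝ), (if z5 + z6 - z2 - z7 > y ∧ z7 + z2 > z5 then (z2 ^ (k-1) * Real.exp (-(lam * z2))) * Real.exp (-(mu * (z5 + z6 + z7))) else 0))) * (∫ z1 in Set.Ioi (0:ℝ), (if z3 > x + z1 then (z1 ^ (j-1) * Real.exp (-(lam * z1))) * Real.exp (-(mu * z3)) else 0)) from funext fun z3 => by ring]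
    rw [integral_const_mul, lemA lam mu x hlam hmu hx j hj]
  have H4 : ∀ z5 z6 z7 z8 : ℝ,
      (∫ z4 in Set.Ioi (0:ℝ), ∫ z3 in Set.Ioi (0:ℝ), ∫ z2 in Set.Ioi (0:ℝ),
        ∫ z1 in Set.Ioi (0:ℝ), (if z3 > x + z1 ∧ z4 > x ∧ z8 > y ∧ z5 + z6 - z2 - z7 > y ∧ z7 + z2 > z5 then
            mu ^ 6 * Real.exp (-(mu * (z3 + z4 + z5 + z6 + z7 + z8))) *
              (lam ^ (j + k) * z1 ^ (j - 1) * z2 ^ (k - 1) /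
                (Real.Gamma j * Real.Gamma k)) *
              Real.exp (-(lam * (z1 + z2)))
          else 0))
      = ((mu ^ 6 * lam ^ (j + k) / (Real.Gamma j * Real.Gamma k)) * (if z8 > y then Real.exp (-(mu * z8)) else 0) * (∫ z2 in Set.Ioi (0:ℝ), (if z5 + z6 - z2 - z7 > y ∧ z7 + z2 > z5 then (z2 ^ (k-1) * Real.exp (-(lam * z2))) * Real.exp (-(mu * (z5 + z6 + z7))) else 0)) * (Real.exp (-(mu * x)) / mu * ((j-1).factorial / (lam + mu) ^ j))) * (Real.exp (-(mu * x)) / mu) := by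
    intro z5 z6 z7 z8
    simp only [H3]
    rw [show (fun z4 : ℝ => ((mu ^ 6 * lam ^ (j + k) / (Real.Gamma j * Real.Gamma k)) * (if z8 > y then Real.exp (-(mu * z8)) else 0) * (if z4 > x then Real.exp (-(mu * z4)) else 0) * (∫ z2 in Set.Ioi (0:ℝ), (if z5 + z6 - z2 - z7 > y ∧ z7 + z2 > z5 then (z2 ^ (k-1) * Real.exp (-(lam * z2))) * Real.exp (-(mu * (z5 + z6 + z7))) else 0))) * (Real.exp (-(mu * x)) / mu * ((j-1).factorial / (lam + mu) ^ j)))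
        = fun z4 : ℝ => ((mu ^ 6 * lam ^ (j + k) / (Real.Gamma j * Real.Gamma k)) * (if z8 > y then Real.exp (-(mu * z8)) else 0) * (∫ z2 in Set.Ioi (0:ℝ), (if z5 + z6 - z2 - z7 > y ∧ z7 + z2 > z5 then (z2 ^ (k-1) * Real.exp (-(lam * z2))) * Real.exp (-(mu * (z5 + z6 + z7))) else 0)) * (Real.exp (-(mu * x)) / mu * ((j-1).factorial / (lam + mu) ^ j))) * (if z4 > x then Real.exp (-(mu * z4)) else 0) from funext fun z4 => by ring]
    rw [integral_const_mul, Hg4]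
  have H5 : ∀ z6 z7 z8 : ℝ,
      (∫ z5 in Set.Ioi (0:ℝ), ∫ z4 in Set.Ioi (0:ℝ), ∫ z3 in Set.Ioi (0:ℝ),
        ∫ z2 in Set.Ioi (0:ℝ), ∫ z1 in Set.Ioi (0:ℝ), (if z3 > x + z1 ∧ z4 > x ∧ z8 > y ∧ z5 + z6 - z2 - z7 > y ∧ z7 + z2 > z5 then
            mu ^ 6 * Real.exp (-(mu * (z3 + z4 + z5 + z6 + z7 + z8))) *
              (lam ^ (j + k) * z1 ^ (j - 1) * z2 ^ (k - 1) /
                (Real.Gamma j * Real.Gamma k)) *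
              Real.exp (-(lam * (z1 + z2)))
          else 0))
      = ((mu ^ 6 * lam ^ (j + k) / (Real.Gamma j * Real.Gamma k)) * (if z8 > y then Real.exp (-(mu * z8)) else 0) * (Real.exp (-(mu * x)) / mu * ((j-1).factorial / (lam + mu) ^ j)) * (Real.exp (-(mu * x)) / mu)) * (∫ z5 in Set.Ioi (0:ℝ), ∫ z2 in Set.Ioi (0:ℝ), (if z5 + z6 - z2 - z7 > y ∧ z7 + z2 > z5 then (z2 ^ (k-1) * Real.exp (-(lam * z2))) * Real.exp (-(mu * (z5 + z6 + z7))) else 0)) := by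
    intro z6 z7 z8
    simp only [H4]
    rw [show (fun z5 : ℝ => ((mu ^ 6 * lam ^ (j + k) / (Real.Gamma j * Real.Gamma k)) * (if z8 > y then Real.exp (-(mu * z8)) else 0) * (∫ z2 in Set.Ioi (0:ℝ), (if z5 + z6 - z2 - z7 > y ∧ z7 + z2 > z5 then (z2 ^ (k-1) * Real.exp (-(lam * z2))) * Real.exp (-(mu * (z5 + z6 + z7))) else 0)) * (Real.exp (-(mu * x)) / mu * ((j-1).factorial / (lam + mu) ^ j))) * (Real.exp (-(mu * x)) / mu))
        = fun z5 : ℝ => ((mu ^ 6 * lam ^ (j + k) / (Real.Gamma j * Real.Gamma k)) * (if z8 > y then Real.exp (-(mu * z8)) else 0) * (Real.exp (-(mu * x)) / mu * ((j-1).factorial / (lam + mu) ^ j)) * (Real.exp (-(mu * x)) / mu)) * (∫ z2 in Set.Ioi (0:ℝ), (if z5 + z6 - z2 - z7 > y ∧ z7 + z2 > z5 then (z2 ^ (k-1) * Real.exp (-(lam * z2))) * Real.exp (-(mu * (z5 + z6 + z7))) else 0)) from funext fun z5 => by ring]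
    exact integral_const_mul _ _
  have H6 : ∀ z7 z8 : ℝ,
      (∫ z6 in Set.Ioi (0:ℝ), ∫ z5 in Set.Ioi (0:ℝ), ∫ z4 in Set.Ioi (0:ℝ),
        ∫ z3 in Set.Ioi (0:ℝ), ∫ z2 in Set.Ioi (0:ℝ), ∫ z1 in Set.Ioi (0:ℝ), (if z3 > x + z1 ∧ z4 > x ∧ z8 > y ∧ z5 + z6 - z2 - z7 > y ∧ z7 + z2 > z5 then
            mu ^ 6 * Real.exp (-(mu * (z3 + z4 + z5 + z6 + z7 + z8))) *
              (lam ^ (j + k) * z1 ^ (j - 1) * z2 ^ (k - 1) /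
                (Real.Gamma j * Real.Gamma k)) *
              Real.exp (-(lam * (z1 + z2)))
          else 0))
      = ((mu ^ 6 * lam ^ (j + k) / (Real.Gamma j * Real.Gamma k)) * (if z8 > y then Real.exp (-(mu * z8)) else 0) * (Real.exp (-(mu * x)) / mu * ((j-1).factorial / (lam + mu) ^ j)) * (Real.exp (-(mu * x)) / mu)) * (∫ z6 in Set.Ioi (0:ℝ), ∫ z5 in Set.Ioi (0:ℝ), ∫ z2 in Set.Ioi (0:ℝ), (if z5 + z6 - z2 - z7 > y ∧ z7 + z2 > z5 then (z2 ^ (k-1) * Real.exp (-(lam * z2))) * Real.exp (-(mu * (z5 + z6 + z7))) else 0)) := by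
    intro z7 z8
    simp only [H5]
    exact integral_const_mul _ _
  have H7 : ∀ z8 : ℝ,
      (∫ z7 in Set.Ioi (0:ℝ), ∫ z6 in Set.Ioi (0:ℝ), ∫ z5 in Set.Ioi (0:ℝ),
        ∫ z4 in Set.Ioi (0:ℝ), ∫ z3 in Set.Ioi (0:ℝ), ∫ z2 in Set.Ioi (0:ℝ),
          ∫ z1 in Set.Ioi (0:ℝ), (if z3 > x + z1 ∧ z4 > x ∧ z8 > y ∧ z5 + z6 - z2 - z7 > y ∧ z7 + z2 > z5 then
            mu ^ 6 * Real.exp (-(mu * (z3 + z4 + z5 + z6 + z7 + z8))) *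
              (lam ^ (j + k) * z1 ^ (j - 1) * z2 ^ (k - 1) /
                (Real.Gamma j * Real.Gamma k)) *
              Real.exp (-(lam * (z1 + z2)))
          else 0))
      = ((mu ^ 6 * lam ^ (j + k) / (Real.Gamma j * Real.Gamma k)) * (if z8 > y then Real.exp (-(mu * z8)) else 0) * (Real.exp (-(mu * x)) / mu * ((j-1).factorial / (lam + mu) ^ j)) * (Real.exp (-(mu * x)) / mu)) * (Real.exp (-(mu * y)) / mu * ((k-1).factorial / (lam + mu) ^ k / (4 * mu ^ 2) + k.factorial / (lam + mu) ^ (k + 1) / (2 * mu))) := by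
    intro z8
    simp only [H6]
    rw [integral_const_mul, lemB lam mu y hlam hmu hy k hk]
  simp only [H7]
  rw [show (fun z8 : ℝ => ((mu ^ 6 * lam ^ (j + k) / (Real.Gamma j * Real.Gamma k)) * (if z8 > y then Real.exp (-(mu * z8)) else 0) * (Real.exp (-(mu * x)) / mu * ((j-1).factorial / (lam + mu) ^ j)) * (Real.exp (-(mu * x)) / mu)) * (Real.exp (-(mu * y)) / mu * ((k-1).factorial / (lam + mu) ^ k / (4 * mu ^ 2) + k.factorial / (lam + mu) ^ (k + 1) / (2 * mu))))
      = fun z8 : ℝ => ((mu ^ 6 * lam ^ (j + k) / (Real.Gamma j * Real.Gamma k)) * (Real.exp (-(mu * x)) / mu * ((j-1).factorial / (lam + mu) ^ j)) * (Real.exp (-(mu * x)) / mu) * (Real.exp (-(mu * y)) / mu * ((k-1).factorial / (lam + mu) ^ k / (4 * mu ^ 2) + k.factorial / (lam + mu) ^ (k + 1) / (2 * mu)))) * (if z8 > y then Real.exp (-(mu * z8)) else 0) from funext fun z8 => by ring]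
  rw [integral_const_mul, Hg8]
  -- final arithmetic
  have hΓj : Real.Gamma (j : ℝ) = (j-1).factorial := by
    obtain ⟨j', rfl⟩ : ∃ j', j = j' + 1 := ⟨j - 1, (Nat.succ_pred_eq_of_pos hj).symm⟩
    rw [show ((j' + 1 : ℕ) : ℝ) = (j' : ℝ) + 1 by push_cast; ring,
      Real.Gamma_nat_eq_factorial]
    simp
  have hΓk : Real.Gamma (k : ℝ) = (k-1).factorial := by
    obtain ⟨k', rfl⟩ : ∃ k', k = k' + 1 := ⟨k - 1, (Nat.succ_pred_eq_of_pos hk).symm⟩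
    rw [show ((k' + 1 : ℕ) : ℝ) = (k' : ℝ) + 1 by push_cast; ring,
      Real.Gamma_nat_eq_factorial]
    simp
  have hkf : (k.factorial : ℝ) = k * (k-1).factorial := by
    obtain ⟨k', rfl⟩ : ∃ k', k = k' + 1 := ⟨k - 1, (Nat.succ_pred_eq_of_pos hk).symm⟩
    rw [Nat.factorial_succ]
    push_cast
    simp
  have hE : Real.exp (-(2 * mu * (x + y)))
      = Real.exp (-(mu * x)) * Real.exp (-(mu * x)) * Real.exp (-(mu * y)) * Real.exp (-(mu * y)) := by
    rw [← Real.exp_add, ← Real.exp_add, ← Real.exp_add]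
    ring_nf
  have hfj : ((j-1).factorial : ℝ) ≠ 0 := Nat.cast_ne_zero.mpr (Nat.factorial_ne_zero _)
  have hfk : ((k-1).factorial : ℝ) ≠ 0 := Nat.cast_ne_zero.mpr (Nat.factorial_ne_zero _)
  rw [hΓj, hΓk, hkf, hE, div_pow, pow_add (lam + mu) j k, pow_succ (lam + mu) k]
  field_simp
  ring
end
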